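/- arXiv:2507.09004 — 7 statements merged into one kernel-verified Lean document; each statement's English description precedes it below -/
import Mathlib

section
/- For a finite sample x = (x¹, …, xⁿ) ∈ ℝⁿ define the empirical quantile function Q_x : (0,1) → ℝ by Q_x(u) = x^{(⌊nu⌋ + 1)}, where x^{(k)} is the k-th smallest entry of x. Then for any two samples x, y ∈ ℝⁿ, sup_{0 < u < 1} |Q_x(u) − Q_y(u)| = max_{i=1,…,n} |x^{(i)} − y^{(i)}| ≤ max_{i=1,…,n} |x^i − y^i|. -/
/-- The `i`-th smallest entry of the tuple `x` (nondecreasing rearrangement). -/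
noncomputable def sortedTuple {n : ℕ} (x : Fin n → ℝ) : Fin n → ℝ :=
  fun i => x (Tuple.sort x i)

/-- The empirical quantile function `Q_x(u) = x^{(⌊nu⌋+1)}` of the sample `x`
(with `0`-based indexing, the `(⌊nu⌋+1)`-th smallest entry is `sortedTuple x ⌊nu⌋`);
junk value `0` outside the admissible index range. -/
noncomputable def empQuantile {n : ℕ} (x : Fin n → ℝ) (u : ℝ) : ℝ :=
  if h : (⌊(n : ℝ) * u⌋).toNat < n then sortedTuple x ⟨(⌊(n : ℝ) * u⌋).toNat, h⟩ else 0

lemma monotone_sortedTuple {n : ℕ} (x : Fin n → ℝ) : Monotone (sortedTuple x) :=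
  Tuple.monotone_sort x

lemma card_subtype_sorted {n : ℕ} (x : Fin n → ℝ) (a : ℝ) :
    Fintype.card {k // sortedTuple x k ≤ a} = Fintype.card {k // x k ≤ a} :=
  Fintype.card_congr ((Tuple.sort x).subtypeEquiv (fun _ => Iff.rfl))

lemma sorted_le_iff {n : ℕ} (x : Fin n → ℝ) (a : ℝ) (i : Fin n) :
    sortedTuple x i ≤ a ↔ (i : ℕ) < Fintype.card {k // x k ≤ a} := by
  rw [← card_subtype_sorted, Fintype.card_subtype]
  exact (Tuple.lt_card_le_iff_apply_le_of_monotone (f := sortedTuple x) (a := a)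
    (monotone_sortedTuple x) (j := i)).symm

lemma sorted_add_le {n : ℕ} (x y : Fin n → ℝ) (M : ℝ) (h : ∀ j, x j ≤ y j + M) (i : Fin n) :
    sortedTuple x i ≤ sortedTuple y i + M := by
  rw [sorted_le_iff]
  have h1 : (i : ℕ) < Fintype.card {k // y k ≤ sortedTuple y i} := by
    rw [← sorted_le_iff]
  exact h1.trans_le (Fintype.card_subtype_mono _ _
    (fun k hk => le_trans (h k) (by linarith)))

/-- `sup_{0<u<1} |Q_x(u) - Q_y(u)| = max_i |x^{(i)} - y^{(i)}| ≤ max_i |xⁱ - yⁱ|`. -/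
theorem empQuantile_sup_eq_sorted_max_le {n : ℕ} (hn : 0 < n) (x y : Fin n → ℝ) :
    (⨆ u : Set.Ioo (0 : ℝ) 1, |empQuantile x u.1 - empQuantile y u.1|)
        = (⨆ i : Fin n, |sortedTuple x i - sortedTuple y i|)
    ∧ (⨆ i : Fin n, |sortedTuple x i - sortedTuple y i|) ≤ ⨆ i : Fin n, |x i - y i| := by
  have hne : Nonempty (Fin n) := ⟨⟨0, hn⟩⟩
  have hnr : (0 : ℝ) < n := by exact_mod_cast hn
  have hIoo : Nonempty (Set.Ioo (0 : ℝ) 1) := ⟨⟨1/2, by norm_num⟩⟩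
  set g : Fin n → ℝ := fun i => |sortedTuple x i - sortedTuple y i| with hg
  have hgbdd : BddAbove (Set.range g) := (Set.finite_range g).bddAbove
  -- every value of the quantile difference is a value of g
  have hval : ∀ u : Set.Ioo (0 : ℝ) 1, ∃ i : Fin n,
      |empQuantile x u.1 - empQuantile y u.1| = g i := by
    rintro ⟨u, hu0, hu1⟩
    have hfl : ⌊(n : ℝ) * u⌋ < (n : ℤ) := by
      apply Int.floor_lt.2
      push_cast
      nlinarith
    have hfl0 : 0 ≤ ⌊(n : ℝ) * u⌋ := Int.floor_nonneg.2 (by positivity)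
    have hk : (⌊(n : ℝ) * u⌋).toNat < n := by omega
    refine ⟨⟨(⌊(n : ℝ) * u⌋).toNat, hk⟩, ?_⟩
    simp only [empQuantile, dif_pos hk, hg]
  -- every value of g is attained by the quantile difference
  have hattain : ∀ i : Fin n, ∃ u : Set.Ioo (0 : ℝ) 1,
      |empQuantile x u.1 - empQuantile y u.1| = g i := by
    intro i
    have hi : (i : ℝ) + 1/2 < n := by
      have : (i : ℝ) + 1 ≤ n := by exact_mod_cast i.2
      linarith
    have hu0 : (0 : ℝ) < ((i : ℝ) + 1/2) / n := by positivity
    have hu1 : ((i : ℝ) + 1/2) / n < 1 := (div_lt_one hnr).2 hi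
    refine ⟨⟨((i : ℝ) + 1/2) / n, hu0, hu1⟩, ?_⟩
    have hmul : (n : ℝ) * (((i : ℝ) + 1/2) / n) = (i : ℝ) + 1/2 := by
      field_simp
    have hfloor : ⌊(n : ℝ) * (((i : ℝ) + 1/2) / n)⌋ = (i : ℤ) := by
      rw [hmul]
      rw [Int.floor_eq_iff]
      push_cast
      constructor <;> linarith
    have hk : (⌊(n : ℝ) * (((i : ℝ) + 1/2) / n)⌋).toNat < n := by
      rw [hfloor]; simp [i.2]
    have hidx : (⟨(⌊(n : ℝ) * (((i : ℝ) + 1/2) / n)⌋).toNat, hk⟩ : Fin n) = i := by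
      exact Fin.ext (by simp only [Fin.val_mk]; omega)
    simp only [empQuantile, dif_pos hk, hidx, hg]
  have hfbdd : BddAbove (Set.range fun u : Set.Ioo (0 : ℝ) 1 =>
      |empQuantile x u.1 - empQuantile y u.1|) := by
    refine ⟨⨆ i : Fin n, g i, ?_⟩
    rintro v ⟨u, rfl⟩
    obtain ⟨i, hi⟩ := hval u
    refine le_trans (le_of_eq hi) (le_ciSup hgbdd i)
  constructor
  · apply le_antisymm
    · apply ciSup_le
      intro u
      obtain ⟨i, hi⟩ := hval u
      rw [hi]
      exact le_ciSup hgbdd i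
    · apply ciSup_le
      intro i
      obtain ⟨u, hu⟩ := hattain i
      rw [← hu]
      exact le_ciSup hfbdd u
  · set M := ⨆ i : Fin n, |x i - y i| with hM
    have hbM : BddAbove (Set.range fun i : Fin n => |x i - y i|) :=
      (Set.finite_range _).bddAbove
    have hle : ∀ j, |x j - y j| ≤ M := fun j => le_ciSup hbM j
    apply ciSup_le
    intro i
    rw [abs_sub_le_iff]
    constructor
    · have := sorted_add_le x y M (fun j => by
        have := hle j; rw [abs_sub_le_iff] at this; linarith [this.1]) i
      linarith
    · have := sorted_add_le y x M (fun j => by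
        have := hle j; rw [abs_sub_le_iff] at this; linarith [this.2]) i
      linarith
end

section
/- Let Z be an ℝ^D-valued random vector admitting a density f_Z, let V, U : ℝ^D → ℝ be measurable, and set X = max{V(Z), 0}, Y = max{U(Z), 0}. Let m be a probability measure on (0,1) with density f_m, and define the quantile-based exposure measure ρ_m(W) = ∫_0^1 Q_W(u) m(du), where Q_W(u) = inf{x ∈ ℝ : P(W ≤ x) ≥ u} is the quantile function. Let 1 ≤ r, q < ∞, p = rq, and let r′, q′ be the conjugate exponents (1/r + 1/r′ = 1, 1/q + 1/q′ = 1). Assume ρ_m(X) and ρ_m(Y) are finite and the norms on the right-hand side are finite. Then |ρ_m(X) − ρ_m(Y)| ≤ ‖V − U‖_{L^p(ℝ^D)} · ‖f_Z‖_{L^{q′}(ℝ^D)}^{1/r} · ‖f_m‖_{L^{r′}(0,1)}. -/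
open MeasureTheory Set Filter Topology
open scoped ENNReal

/-- The (lower) quantile function of a law `μ` on `ℝ`:
`Q(u) = inf {x : μ(-∞, x] ≥ u}`. -/
noncomputable def quantileFun (μ : Measure ℝ) (u : ℝ) : ℝ :=
  sInf {x : ℝ | u ≤ (μ (Set.Iic x)).toReal}

/-- The quantile-based exposure measure `ρ_m(W) = ∫₀¹ Q_W(u) f_m(u) du`, for a probability
measure `m` on `(0,1)` with density `f_m`. -/
noncomputable def rhoM {Ω : Type*} [MeasurableSpace Ω] (P : Measure Ω)
    (fm : ℝ → ℝ) (W : Ω → ℝ) : ℝ :=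
  ∫ u in Set.Ioo (0 : ℝ) 1, quantileFun (Measure.map W P) u * fm u

section Quantile
variable {μ : Measure ℝ} [IsProbabilityMeasure μ]

lemma cdf_mono : Monotone (fun t => (μ (Set.Iic t)).toReal) := fun a b hab =>
  ENNReal.toReal_mono (measure_ne_top _ _) (measure_mono (Set.Iic_subset_Iic.2 hab))

lemma quantile_set_nonempty {u : ℝ} (hu1 : u < 1) :
    {x : ℝ | u ≤ (μ (Set.Iic x)).toReal}.Nonempty := by
  have h1 : Tendsto (fun t : ℝ => (μ (Set.Iic t)).toReal) atTop (𝓝 (1 : ℝ)) := by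
    have := tendsto_measure_Iic_atTop μ
    rw [measure_univ] at this
    exact (ENNReal.tendsto_toReal ENNReal.one_ne_top).comp this
  obtain ⟨x, hx⟩ := (h1.eventually_const_le hu1).exists
  exact ⟨x, hx⟩

lemma quantile_set_bddBelow {u : ℝ} (hu0 : 0 < u) :
    BddBelow {x : ℝ | u ≤ (μ (Set.Iic x)).toReal} := by
  have h0 : Tendsto (fun n : ℕ => μ (Set.Iic (-(n:ℝ)))) atTop (𝓝 (μ (⋂ n : ℕ, Set.Iic (-(n:ℝ))))) := by
    refine tendsto_measure_iInter_atTop (fun n => measurableSet_Iic.nullMeasurableSet)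
      (fun a b hab => Set.Iic_subset_Iic.2 (by exact_mod_cast neg_le_neg (Nat.cast_le.2 hab)))
      ⟨0, measure_ne_top _ _⟩
  have hempty : (⋂ n : ℕ, Set.Iic (-(n:ℝ))) = ∅ := by
    ext x
    simp only [Set.mem_iInter, Set.mem_Iic, Set.mem_empty_iff_false, iff_false, not_forall, not_le]
    obtain ⟨n, hn⟩ := exists_nat_gt (-x)
    exact ⟨n, by linarith⟩
  rw [hempty, measure_empty] at h0
  have h0' : Tendsto (fun n : ℕ => (μ (Set.Iic (-(n:ℝ)))).toReal) atTop (𝓝 (0 : ℝ)) := by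
    have h0'' := (ENNReal.tendsto_toReal ENNReal.zero_ne_top).comp h0
    rw [ENNReal.toReal_zero] at h0''
    exact h0''
  obtain ⟨n, hn⟩ := (h0'.eventually_lt_const hu0).exists
  refine ⟨-(n:ℝ), fun y hy => ?_⟩
  by_contra h
  push_neg at h
  exact absurd (le_trans hy (cdf_mono h.le)) (not_le.2 hn)

lemma le_cdf_quantile {u : ℝ} (hu0 : 0 < u) (hu1 : u < 1) :
    u ≤ (μ (Set.Iic (quantileFun μ u))).toReal := by
  set S := {x : ℝ | u ≤ (μ (Set.Iic x)).toReal} with hS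
  set a := sInf S with ha
  have hmem : ∀ n : ℕ, a + 1/(n+1) ∈ S := by
    intro n
    obtain ⟨x, hxS, hxlt⟩ := Real.lt_sInf_add_pos (quantile_set_nonempty (μ := μ) hu1)
      (by positivity : (0:ℝ) < 1/((n:ℝ)+1))
    exact le_trans hxS (cdf_mono hxlt.le)
  have hinter : (⋂ n : ℕ, Set.Iic (a + 1/(n+1))) = Set.Iic a := by
    ext x
    simp only [Set.mem_iInter, Set.mem_Iic]
    constructor
    · intro h
      by_contra hx
      push_neg at hx
      obtain ⟨n, hn⟩ := exists_nat_one_div_lt (sub_pos.2 hx)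
      have := h n
      linarith
    · intro h n
      have : (0:ℝ) < 1/((n:ℝ)+1) := by positivity
      linarith
  have htend : Tendsto (fun n : ℕ => μ (Set.Iic (a + 1/(n+1)))) atTop (𝓝 (μ (Set.Iic a))) := by
    rw [← hinter]
    refine tendsto_measure_iInter_atTop (fun n => measurableSet_Iic.nullMeasurableSet)
      (fun m n hmn => Set.Iic_subset_Iic.2 (by
        have hmn' : ((m:ℝ)+1) ≤ ((n:ℝ)+1) := by exact_mod_cast Nat.succ_le_succ hmn
        have := one_div_le_one_div_of_le (by positivity : (0:ℝ) < (m:ℝ)+1) hmn'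
        linarith)) ⟨0, measure_ne_top _ _⟩
  have hle : ENNReal.ofReal u ≤ μ (Set.Iic a) := by
    refine ge_of_tendsto htend (Filter.Eventually.of_forall fun n => ?_)
    have hm := hmem n
    calc ENNReal.ofReal u ≤ ENNReal.ofReal ((μ (Set.Iic (a + 1/(n+1)))).toReal) :=
          ENNReal.ofReal_le_ofReal hm
      _ = μ (Set.Iic (a + 1/(n+1))) := ENNReal.ofReal_toReal (measure_ne_top _ _)
  calc u = (ENNReal.ofReal u).toReal := by rw [ENNReal.toReal_ofReal hu0.le]
    _ ≤ (μ (Set.Iic a)).toReal := ENNReal.toReal_mono (measure_ne_top _ _) hle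

lemma quantile_le_iff {u t : ℝ} (hu0 : 0 < u) (hu1 : u < 1) :
    quantileFun μ u ≤ t ↔ u ≤ (μ (Set.Iic t)).toReal := by
  constructor
  · intro h
    exact le_trans (le_cdf_quantile hu0 hu1) (cdf_mono h)
  · intro h
    exact csInf_le (quantile_set_bddBelow hu0) h

end Quantile

section Rep
open Classical in
noncomputable def quantileRep (μ : Measure ℝ) : ℝ → ℝ :=
  (Set.Ioo (0:ℝ) 1).piecewise (quantileFun μ) 0

variable {μ : Measure ℝ} [IsProbabilityMeasure μ]

lemma measurable_quantileRep : Measurable (quantileRep μ) := by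
  classical
  apply measurable_of_Iic
  intro t
  have : quantileRep μ ⁻¹' Set.Iic t =
      (Set.Ioo (0:ℝ) 1 ∩ Set.Iic ((μ (Set.Iic t)).toReal)) ∪
      ((Set.Ioo (0:ℝ) 1)ᶜ ∩ {u : ℝ | (0:ℝ) ≤ t}) := by
    ext u
    by_cases hu : u ∈ Set.Ioo (0:ℝ) 1
    · simp only [Set.mem_preimage, Set.mem_Iic, quantileRep, Set.piecewise_eq_of_mem _ _ _ hu,
        Set.mem_union, Set.mem_inter_iff, Set.mem_compl_iff, hu, not_true, false_and, or_false,
        true_and, Set.mem_setOf_eq]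
      exact quantile_le_iff hu.1 hu.2
    · simp only [Set.mem_preimage, Set.mem_Iic, quantileRep, Set.piecewise_eq_of_notMem _ _ _ hu,
        Set.mem_union, Set.mem_inter_iff, hu, false_and, Set.mem_compl_iff, not_false_iff,
        true_and, false_or, Set.mem_setOf_eq, Pi.zero_apply]
  rw [this]
  refine (measurableSet_Ioo.inter measurableSet_Iic).union
    (measurableSet_Ioo.compl.inter ?_)
  by_cases h : (0:ℝ) ≤ t
  · simp [h]
  · simp [h]

lemma quantileRep_ae_eq :
    quantileRep μ =ᵐ[volume.restrict (Set.Ioo (0:ℝ) 1)] quantileFun μ := by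
  classical
  exact piecewise_ae_eq_restrict measurableSet_Ioo

end Rep

lemma vol_Ioo_inter_Ioc {a b : ℝ} (ha : 0 ≤ a) (hb : b ≤ 1) :
    volume (Set.Ioo (0:ℝ) 1 ∩ Set.Ioc a b) = ENNReal.ofReal (b - a) := by
  rcases le_or_gt b a with h | h
  · rw [Set.Ioc_eq_empty (not_lt.2 h), Set.inter_empty, measure_empty,
      ENNReal.ofReal_eq_zero.2 (by linarith)]
  · refine le_antisymm ?_ ?_
    · calc volume (Set.Ioo (0:ℝ) 1 ∩ Set.Ioc a b) ≤ volume (Set.Ioc a b) :=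
        measure_mono Set.inter_subset_right
      _ = ENNReal.ofReal (b - a) := Real.volume_Ioc
    · calc ENNReal.ofReal (b - a) = volume (Set.Ioo a b) := Real.volume_Ioo.symm
      _ ≤ volume (Set.Ioo (0:ℝ) 1 ∩ Set.Ioc a b) := by
          refine measure_mono fun x hx => ?_
          exact ⟨⟨lt_of_le_of_lt ha hx.1, lt_of_lt_of_le hx.2 hb⟩, ⟨hx.1, hx.2.le⟩⟩

lemma key_coupling {Ω : Type*} [MeasurableSpace Ω] (P : Measure Ω) [IsProbabilityMeasure P]
    (X Y : Ω → ℝ) (hX : Measurable X) (hY : Measurable Y) (c : ℝ) :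
    ∫⁻ u in Set.Ioo (0:ℝ) 1,
        ENNReal.ofReal (quantileFun (Measure.map X P) u - quantileFun (Measure.map Y P) u - c)
      ≤ ∫⁻ ω, ENNReal.ofReal (X ω - Y ω - c) ∂P := by
  haveI : IsProbabilityMeasure (Measure.map X P) := Measure.isProbabilityMeasure_map hX.aemeasurable
  haveI : IsProbabilityMeasure (Measure.map Y P) := Measure.isProbabilityMeasure_map hY.aemeasurable
  set μ := Measure.map X P with hμ
  set ν := Measure.map Y P with hν
  have hFμ : Measurable (fun t => (μ (Set.Iic t)).toReal) := cdf_mono.measurable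
  have hFν : Measurable (fun t => (ν (Set.Iic (t - c))).toReal) :=
    cdf_mono.measurable.comp (measurable_id.sub_const c)
  set A : Set (ℝ × ℝ) :=
    {p : ℝ × ℝ | p.1 ≤ (ν (Set.Iic (p.2 - c))).toReal ∧ (μ (Set.Iic p.2)).toReal < p.1} with hA
  have hAm : MeasurableSet A := by
    refine (measurableSet_le measurable_fst (hFν.comp measurable_snd)).inter
      (measurableSet_lt (hFμ.comp measurable_snd) measurable_fst)
  set B : Set (Ω × ℝ) := {p : Ω × ℝ | p.2 < X p.1 ∧ Y p.1 ≤ p.2 - c} with hB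
  have hBm : MeasurableSet B :=
    (measurableSet_lt measurable_snd (hX.comp measurable_fst)).inter
      (measurableSet_le (hY.comp measurable_fst) ((measurable_snd.sub_const c)))
  calc ∫⁻ u in Set.Ioo (0:ℝ) 1,
        ENNReal.ofReal (quantileFun μ u - quantileFun ν u - c)
      = (∫⁻ u in Set.Ioo (0:ℝ) 1, (∫⁻ t, A.indicator 1 (u, t))) := by
        refine setLIntegral_congr_fun measurableSet_Ioo (
          fun u hu => ?_)
        have hset : {t : ℝ | (u, t) ∈ A} = Set.Ico (quantileFun ν u + c) (quantileFun μ u) := by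
          ext t
          simp only [hA, Set.mem_setOf_eq, Set.mem_Ico]
          constructor
          · rintro ⟨h1, h2⟩
            refine ⟨?_, ?_⟩
            · have := (quantile_le_iff (μ := ν) hu.1 hu.2).2 h1
              linarith
            · by_contra h3
              push_neg at h3
              exact absurd ((quantile_le_iff (μ := μ) hu.1 hu.2).1 h3) (not_le.2 h2)
          · rintro ⟨h1, h2⟩
            refine ⟨(quantile_le_iff (μ := ν) hu.1 hu.2).1 (by linarith), ?_⟩
            by_contra h3
            push_neg at h3
            exact absurd ((quantile_le_iff (μ := μ) hu.1 hu.2).2 h3) (not_le.2 h2)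
        have : ∫⁻ t, A.indicator 1 (u, t) = volume {t : ℝ | (u, t) ∈ A} := by
          rw [← lintegral_indicator_one (by exact measurable_prodMk_left hAm)]
          rfl
        rw [this, hset, Real.volume_Ico]
        congr 1
        ring
    _ = ∫⁻ t, (∫⁻ u in Set.Ioo (0:ℝ) 1, A.indicator 1 (u, t)) := by
        exact lintegral_lintegral_swap (f := fun u t => A.indicator 1 (u, t))
          ((measurable_one.indicator hAm).aemeasurable)
    _ = ∫⁻ t, ENNReal.ofReal ((ν (Set.Iic (t - c))).toReal - (μ (Set.Iic t)).toReal) := by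
        refine lintegral_congr fun t => ?_
        have : ∫⁻ u in Set.Ioo (0:ℝ) 1, A.indicator 1 (u, t) =
            (volume.restrict (Set.Ioo (0:ℝ) 1)) {u : ℝ | (u, t) ∈ A} := by
          rw [← lintegral_indicator_one (by exact measurable_prodMk_right hAm)]
          rfl
        rw [this, Measure.restrict_apply (by exact measurable_prodMk_right hAm)]
        have hset : {u : ℝ | (u, t) ∈ A} =
            Set.Ioc ((μ (Set.Iic t)).toReal) ((ν (Set.Iic (t - c))).toReal) := by
          ext u
          simp only [hA, Set.mem_setOf_eq, Set.mem_Ioc]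
          tauto
        rw [hset, Set.inter_comm]
        exact vol_Ioo_inter_Ioc ENNReal.toReal_nonneg
          (by simpa using ENNReal.toReal_mono ENNReal.one_ne_top prob_le_one)
    _ ≤ ∫⁻ t, P {ω : Ω | (ω, t) ∈ B} := by
        refine lintegral_mono fun t => ?_
        have hsub : Y ⁻¹' Set.Iic (t - c) ⊆ {ω : Ω | (ω, t) ∈ B} ∪ X ⁻¹' Set.Iic t := by
          intro ω hω
          rcases lt_or_ge t (X ω) with h | h
          · exact Or.inl ⟨h, hω⟩
          · exact Or.inr h
        have hle : ν (Set.Iic (t - c)) ≤ P {ω : Ω | (ω, t) ∈ B} + μ (Set.Iic t) := by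
          rw [hν, hμ, Measure.map_apply hY measurableSet_Iic,
            Measure.map_apply hX measurableSet_Iic]
          exact (measure_mono hsub).trans (measure_union_le _ _)
        have hfin : P {ω : Ω | (ω, t) ∈ B} + μ (Set.Iic t) ≠ ⊤ :=
          ENNReal.add_ne_top.2 ⟨measure_ne_top _ _, measure_ne_top _ _⟩
        have h2 := ENNReal.toReal_mono hfin hle
        rw [ENNReal.toReal_add (measure_ne_top _ _) (measure_ne_top _ _)] at h2
        calc ENNReal.ofReal ((ν (Set.Iic (t - c))).toReal - (μ (Set.Iic t)).toReal)
            ≤ ENNReal.ofReal ((P {ω : Ω | (ω, t) ∈ B}).toReal) :=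
              ENNReal.ofReal_le_ofReal (by linarith)
          _ = P {ω : Ω | (ω, t) ∈ B} := ENNReal.ofReal_toReal (measure_ne_top _ _)
    _ = ∫⁻ t, (∫⁻ ω, B.indicator 1 (ω, t) ∂P) := by
        refine lintegral_congr fun t => ?_
        rw [← lintegral_indicator_one (by exact measurable_prodMk_right hBm)]
        rfl
    _ = ∫⁻ ω, (∫⁻ t, B.indicator 1 (ω, t)) ∂P := by
        exact (lintegral_lintegral_swap (f := fun ω t => B.indicator 1 (ω, t))
          ((measurable_one.indicator hBm).aemeasurable)).symm
    _ = ∫⁻ ω, ENNReal.ofReal (X ω - Y ω - c) ∂P := by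
        refine lintegral_congr fun ω => ?_
        have : ∫⁻ t, B.indicator 1 (ω, t) = volume {t : ℝ | (ω, t) ∈ B} := by
          rw [← lintegral_indicator_one (by exact measurable_prodMk_left hBm)]
          rfl
        rw [this]
        have hset : {t : ℝ | (ω, t) ∈ B} = Set.Ico (Y ω + c) (X ω) := by
          ext t
          simp only [hB, Set.mem_setOf_eq, Set.mem_Ico]
          constructor
          · rintro ⟨h1, h2⟩; exact ⟨by linarith, h1⟩
          · rintro ⟨h1, h2⟩; exact ⟨h2, by linarith⟩
        rw [hset, Real.volume_Ico]
        congr 1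
        ring

lemma ofReal_pos_add_neg (z : ℝ) {c : ℝ} (hc : 0 ≤ c) :
    ENNReal.ofReal (z - c) + ENNReal.ofReal (-z - c) = ENNReal.ofReal (|z| - c) := by
  rcases le_or_gt 0 z with h | h
  · rw [abs_of_nonneg h, ENNReal.ofReal_eq_zero.2 (by linarith : -z - c ≤ 0), add_zero]
  · rw [abs_of_neg h, ENNReal.ofReal_eq_zero.2 (by linarith : z - c ≤ 0), zero_add]

lemma layer_calc {r : ℝ} (hr : 1 < r) {a : ℝ} (ha : 0 ≤ a) :
    ∫⁻ c in Set.Ioi (0:ℝ),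
      ENNReal.ofReal (r * (r - 1) * c ^ (r - 2) * max (a - c) 0) = ENNReal.ofReal (a ^ r) := by
  rcases ha.eq_or_lt with h0 | h0
  · have : ∀ c ∈ Set.Ioi (0:ℝ),
        ENNReal.ofReal (r * (r - 1) * c ^ (r - 2) * max (a - c) 0) = 0 := by
      intro c hc
      rw [max_eq_right (by rw [← h0]; simp only [Set.mem_Ioi] at hc; linarith), mul_zero,
        ENNReal.ofReal_zero]
    rw [setLIntegral_congr_fun measurableSet_Ioi this,
      lintegral_zero, ← h0, Real.zero_rpow (by linarith), ENNReal.ofReal_zero]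
  · have hsplit : Set.Ioo (0:ℝ) a ∪ Set.Ici a = Set.Ioi 0 := Set.Ioo_union_Ici_eq_Ioi h0
    have hdisj : Disjoint (Set.Ioo (0:ℝ) a) (Set.Ici a) :=
      Set.disjoint_left.2 fun x hx hx' => absurd hx.2 (not_lt.2 hx')
    rw [← hsplit, lintegral_union measurableSet_Ici hdisj]
    have hIci : ∫⁻ c in Set.Ici a,
        ENNReal.ofReal (r * (r - 1) * c ^ (r - 2) * max (a - c) 0) = 0 := by
      rw [setLIntegral_congr_fun measurableSet_Ici (
        fun c hc => ?_), lintegral_zero]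
      rw [max_eq_right (by simp only [Set.mem_Ici] at hc; linarith), mul_zero,
        ENNReal.ofReal_zero]
    rw [hIci, add_zero]
    -- integrability of the two power pieces
    have hi1 : IntegrableOn (fun c : ℝ => c ^ (r - 2)) (Set.Ioo 0 a) := by
      have := intervalIntegral.intervalIntegrable_rpow' (a := 0) (b := a)
        (by linarith : (-1:ℝ) < r - 2)
      rw [intervalIntegrable_iff_integrableOn_Ioo_of_le h0.le] at this
      exact this
    have hi2 : IntegrableOn (fun c : ℝ => c ^ (r - 1)) (Set.Ioo 0 a) := by
      have := intervalIntegral.intervalIntegrable_rpow' (a := 0) (b := a)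
        (by linarith : (-1:ℝ) < r - 1)
      rw [intervalIntegrable_iff_integrableOn_Ioo_of_le h0.le] at this
      exact this
    have heq : Set.EqOn (fun c : ℝ => r * (r - 1) * (a * c ^ (r - 2)) - r * (r - 1) * c ^ (r - 1))
        (fun c : ℝ => r * (r - 1) * c ^ (r - 2) * max (a - c) 0) (Set.Ioo 0 a) := by
      intro c hc
      have hc0 : (0:ℝ) < c := hc.1
      have hmax : max (a - c) 0 = a - c := max_eq_left (by linarith [hc.2])
      have hpow : c ^ (r - 1) = c ^ (r - 2) * c := by
        rw [show r - 1 = (r - 2) + 1 by ring, Real.rpow_add hc0, Real.rpow_one]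
      simp only [hmax, hpow]
      ring
    have hint : IntegrableOn
        (fun c : ℝ => r * (r - 1) * c ^ (r - 2) * max (a - c) 0) (Set.Ioo 0 a) := by
      refine IntegrableOn.congr_fun ?_ heq measurableSet_Ioo
      exact ((hi1.const_mul a).const_mul (r * (r-1))).sub (hi2.const_mul (r * (r-1)))
    have hnn : 0 ≤ᵐ[volume.restrict (Set.Ioo (0:ℝ) a)]
        fun c : ℝ => r * (r - 1) * c ^ (r - 2) * max (a - c) 0 := by
      refine MeasureTheory.ae_restrict_of_forall_mem measurableSet_Ioo fun c hc => ?_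
      have hc0 : (0:ℝ) < c := hc.1
      have h1 : (0:ℝ) ≤ c ^ (r - 2) := (Real.rpow_pos_of_pos hc0 _).le
      have h2 : (0:ℝ) ≤ max (a - c) 0 := le_max_right _ _
      have h3 : (0:ℝ) ≤ r * (r - 1) := by nlinarith
      exact mul_nonneg (mul_nonneg h3 h1) h2
    rw [← ofReal_integral_eq_lintegral_ofReal hint hnn]
    congr 1
    rw [← MeasureTheory.integral_Ioc_eq_integral_Ioo,
      ← intervalIntegral.integral_of_le h0.le]
    have heq' : Set.EqOn (fun c : ℝ => r * (r - 1) * c ^ (r - 2) * max (a - c) 0)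
        (fun c : ℝ => r * (r - 1) * (a * c ^ (r - 2)) - r * (r - 1) * c ^ (r - 1))
        (Set.uIcc 0 a) := by
      intro c hc
      rcases eq_or_lt_of_le (Set.uIcc_of_le h0.le ▸ hc : c ∈ Set.Icc 0 a).1 with hc0 | hc0
      · simp only [← hc0]
        rw [Real.zero_rpow (by linarith : r - 1 ≠ 0)]
        rcases eq_or_ne (r - 2) 0 with h2 | h2
        · simp only [h2, Real.rpow_zero, sub_zero, max_eq_left ha]
          ring
        · rw [Real.zero_rpow h2]
          simp
      · have hmax : max (a - c) 0 = a - c :=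
          max_eq_left (by linarith [(Set.uIcc_of_le h0.le ▸ hc : c ∈ Set.Icc 0 a).2])
        have hpow : c ^ (r - 1) = c ^ (r - 2) * c := by
          rw [show r - 1 = (r - 2) + 1 by ring, Real.rpow_add hc0, Real.rpow_one]
        simp only [hmax, hpow]
        ring
    rw [intervalIntegral.integral_congr heq']
    have e1 : ∫ c in (0:ℝ)..a, c ^ (r - 2) = a ^ (r - 1) / (r - 1) := by
      rw [integral_rpow (Or.inl (by linarith))]
      rw [Real.zero_rpow (by linarith : r - 2 + 1 ≠ 0), show r - 2 + 1 = r - 1 by ring, sub_zero]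
    have e2 : ∫ c in (0:ℝ)..a, c ^ (r - 1) = a ^ r / r := by
      rw [integral_rpow (Or.inl (by linarith))]
      rw [Real.zero_rpow (by linarith : r - 1 + 1 ≠ 0), show r - 1 + 1 = r by ring, sub_zero]
    rw [intervalIntegral.integral_sub (((intervalIntegral.intervalIntegrable_rpow'
        (by linarith : (-1:ℝ) < r - 2)).const_mul a).const_mul _)
      ((intervalIntegral.intervalIntegrable_rpow' (by linarith : (-1:ℝ) < r - 1)).const_mul _),
      intervalIntegral.integral_const_mul, intervalIntegral.integral_const_mul,
      intervalIntegral.integral_const_mul, e1, e2]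
    have haa : a * a ^ (r - 1) = a ^ r := by
      calc a * a ^ (r - 1) = a ^ (1:ℝ) * a ^ (r - 1) := by rw [Real.rpow_one]
        _ = a ^ (1 + (r - 1)) := (Real.rpow_add h0 _ _).symm
        _ = a ^ r := by norm_num
    have h1 : r - 1 ≠ 0 := by linarith
    have h2 : r ≠ 0 := by linarith
    rw [mul_div_assoc', haa]
    field_simp
    ring

lemma quantile_lr_le {Ω : Type*} [MeasurableSpace Ω] (P : Measure Ω) [IsProbabilityMeasure P]
    (X Y : Ω → ℝ) (hX : Measurable X) (hY : Measurable Y) {r : ℝ} (hr : 1 ≤ r) :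
    ∫⁻ u in Set.Ioo (0:ℝ) 1,
        ENNReal.ofReal (|quantileFun (Measure.map X P) u - quantileFun (Measure.map Y P) u| ^ r)
      ≤ ∫⁻ ω, ENNReal.ofReal (|X ω - Y ω| ^ r) ∂P := by
  haveI : IsProbabilityMeasure (Measure.map X P) := Measure.isProbabilityMeasure_map hX.aemeasurable
  haveI : IsProbabilityMeasure (Measure.map Y P) := Measure.isProbabilityMeasure_map hY.aemeasurable
  set gX := quantileRep (Measure.map X P) with hgX
  set gY := quantileRep (Measure.map Y P) with hgY
  have hgXm : Measurable gX := measurable_quantileRep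
  have hgYm : Measurable gY := measurable_quantileRep
  have haeX := quantileRep_ae_eq (μ := Measure.map X P)
  have haeY := quantileRep_ae_eq (μ := Measure.map Y P)
  have hkey : ∀ c : ℝ, ∫⁻ u in Set.Ioo (0:ℝ) 1, ENNReal.ofReal (gX u - gY u - c)
      ≤ ∫⁻ ω, ENNReal.ofReal (X ω - Y ω - c) ∂P := by
    intro c
    have : (fun u => ENNReal.ofReal (gX u - gY u - c)) =ᵐ[volume.restrict (Set.Ioo (0:ℝ) 1)]
        (fun u => ENNReal.ofReal (quantileFun (Measure.map X P) u
          - quantileFun (Measure.map Y P) u - c)) := by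
      filter_upwards [haeX, haeY] with u h1 h2
      simp only [hgX, hgY, h1, h2]
    rw [lintegral_congr_ae this]
    exact key_coupling P X Y hX hY c
  have hkey' : ∀ c : ℝ, ∫⁻ u in Set.Ioo (0:ℝ) 1, ENNReal.ofReal (gY u - gX u - c)
      ≤ ∫⁻ ω, ENNReal.ofReal (Y ω - X ω - c) ∂P := by
    intro c
    have : (fun u => ENNReal.ofReal (gY u - gX u - c)) =ᵐ[volume.restrict (Set.Ioo (0:ℝ) 1)]
        (fun u => ENNReal.ofReal (quantileFun (Measure.map Y P) u
          - quantileFun (Measure.map X P) u - c)) := by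
      filter_upwards [haeX, haeY] with u h1 h2
      simp only [hgX, hgY, h1, h2]
    rw [lintegral_congr_ae this]
    exact key_coupling P Y X hY hX c
  have hcongr : ∫⁻ u in Set.Ioo (0:ℝ) 1,
      ENNReal.ofReal (|quantileFun (Measure.map X P) u - quantileFun (Measure.map Y P) u| ^ r)
      = ∫⁻ u in Set.Ioo (0:ℝ) 1, ENNReal.ofReal (|gX u - gY u| ^ r) := by
    refine lintegral_congr_ae ?_
    filter_upwards [haeX, haeY] with u h1 h2
    simp only [hgX, hgY, h1, h2]
  rw [hcongr]
  rcases eq_or_lt_of_le hr with hr1 | hr1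
  · -- r = 1
    simp only [← hr1, Real.rpow_one]
    have hsplit : ∀ z : ℝ, ENNReal.ofReal (|z|) = ENNReal.ofReal (z - 0)
        + ENNReal.ofReal (-z - 0) := by
      intro z
      rw [ofReal_pos_add_neg z le_rfl, sub_zero]
    calc ∫⁻ u in Set.Ioo (0:ℝ) 1, ENNReal.ofReal (|gX u - gY u|)
        = ∫⁻ u in Set.Ioo (0:ℝ) 1, (ENNReal.ofReal (gX u - gY u - 0)
            + ENNReal.ofReal (gY u - gX u - 0)) := by
          refine lintegral_congr fun u => ?_
          rw [hsplit (gX u - gY u)]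
          have hx : -(gX u - gY u) - 0 = gY u - gX u - 0 := by ring
          rw [hx]
      _ = (∫⁻ u in Set.Ioo (0:ℝ) 1, ENNReal.ofReal (gX u - gY u - 0))
            + ∫⁻ u in Set.Ioo (0:ℝ) 1, ENNReal.ofReal (gY u - gX u - 0) := by
          refine lintegral_add_left ?_ _
          exact ((hgXm.sub hgYm).sub_const 0).ennreal_ofReal
      _ ≤ (∫⁻ ω, ENNReal.ofReal (X ω - Y ω - 0) ∂P)
            + ∫⁻ ω, ENNReal.ofReal (Y ω - X ω - 0) ∂P := add_le_add (hkey 0) (hkey' 0)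
      _ = ∫⁻ ω, (ENNReal.ofReal (X ω - Y ω - 0) + ENNReal.ofReal (Y ω - X ω - 0)) ∂P := by
          refine (lintegral_add_left ?_ _).symm
          exact ((hX.sub hY).sub_const 0).ennreal_ofReal
      _ = ∫⁻ ω, ENNReal.ofReal (|X ω - Y ω|) ∂P := by
          refine lintegral_congr fun ω => ?_
          rw [hsplit (X ω - Y ω)]
          have hx : -(X ω - Y ω) - 0 = Y ω - X ω - 0 := by ring
          rw [hx]
  · -- 1 < r
    set w : ℝ → ℝ≥0∞ := fun c => ENNReal.ofReal (r * (r - 1) * c ^ (r - 2)) with hw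
    have hwm : Measurable w :=
      ENNReal.measurable_ofReal.comp ((measurable_id.pow measurable_const).const_mul _)
    have hlayer : ∀ z : ℝ, ENNReal.ofReal (|z| ^ r)
        = ∫⁻ c in Set.Ioi (0:ℝ), w c * (ENNReal.ofReal (z - c) + ENNReal.ofReal (-z - c)) := by
      intro z
      rw [← layer_calc hr1 (abs_nonneg z)]
      refine (setLIntegral_congr_fun measurableSet_Ioi (
        fun c hc => ?_)).symm
      have hc0 : (0:ℝ) < c := hc
      have hKnn : (0:ℝ) ≤ r * (r - 1) * c ^ (r - 2) :=
        mul_nonneg (by nlinarith) (Real.rpow_pos_of_pos hc0 _).le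
      rw [ofReal_pos_add_neg z hc0.le, hw]
      rcases le_or_gt 0 (|z| - c) with hzc | hzc
      · rw [← ENNReal.ofReal_mul hKnn, max_eq_left hzc]
      · rw [ENNReal.ofReal_eq_zero.2 hzc.le, mul_zero, max_eq_right hzc.le, mul_zero,
          ENNReal.ofReal_zero]
    calc ∫⁻ u in Set.Ioo (0:ℝ) 1, ENNReal.ofReal (|gX u - gY u| ^ r)
        = ∫⁻ u in Set.Ioo (0:ℝ) 1, (∫⁻ c in Set.Ioi (0:ℝ),
            w c * (ENNReal.ofReal (gX u - gY u - c)
              + ENNReal.ofReal (gY u - gX u - c))) := by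
          refine lintegral_congr fun u => ?_
          rw [hlayer (gX u - gY u)]
          refine lintegral_congr fun c => ?_
          congr 3
          ring
      _ = ∫⁻ c in Set.Ioi (0:ℝ), (∫⁻ u in Set.Ioo (0:ℝ) 1,
            w c * (ENNReal.ofReal (gX u - gY u - c)
              + ENNReal.ofReal (gY u - gX u - c))) := by
          refine lintegral_lintegral_swap (f := fun u c => w c * (ENNReal.ofReal (gX u - gY u - c)
            + ENNReal.ofReal (gY u - gX u - c))) ?_
          refine Measurable.aemeasurable ?_
          refine Measurable.mul (hwm.comp measurable_snd) (Measurable.fun_add ?_ ?_)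
          · exact (((hgXm.sub hgYm).comp measurable_fst).sub measurable_snd).ennreal_ofReal
          · exact (((hgYm.sub hgXm).comp measurable_fst).sub measurable_snd).ennreal_ofReal
      _ ≤ ∫⁻ c in Set.Ioi (0:ℝ), (∫⁻ ω, w c * (ENNReal.ofReal (X ω - Y ω - c)
              + ENNReal.ofReal (Y ω - X ω - c)) ∂P) := by
          refine lintegral_mono fun c => ?_
          rw [lintegral_const_mul _ (Measurable.fun_add
              (((hgXm.fun_sub hgYm).sub_const c).ennreal_ofReal)
              (((hgYm.fun_sub hgXm).sub_const c).ennreal_ofReal)),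
            lintegral_const_mul _ (Measurable.fun_add
              (((hX.fun_sub hY).sub_const c).ennreal_ofReal)
              (((hY.fun_sub hX).sub_const c).ennreal_ofReal))]
          refine mul_le_mul_right ?_ _
          rw [lintegral_add_left (((hgXm.fun_sub hgYm).sub_const c).ennreal_ofReal),
            lintegral_add_left (((hX.fun_sub hY).sub_const c).ennreal_ofReal)]
          exact add_le_add (hkey c) (hkey' c)
      _ = ∫⁻ ω, (∫⁻ c in Set.Ioi (0:ℝ), w c * (ENNReal.ofReal (X ω - Y ω - c)
              + ENNReal.ofReal (Y ω - X ω - c))) ∂P := by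
          refine (lintegral_lintegral_swap (f := fun ω c => w c * (ENNReal.ofReal (X ω - Y ω - c)
            + ENNReal.ofReal (Y ω - X ω - c))) ?_).symm
          refine Measurable.aemeasurable ?_
          refine Measurable.mul (hwm.comp measurable_snd) (Measurable.fun_add ?_ ?_)
          · exact (((hX.sub hY).comp measurable_fst).sub measurable_snd).ennreal_ofReal
          · exact (((hY.sub hX).comp measurable_fst).sub measurable_snd).ennreal_ofReal
      _ = ∫⁻ ω, ENNReal.ofReal (|X ω - Y ω| ^ r) ∂P := by
          refine lintegral_congr fun ω => ?_
          rw [hlayer (X ω - Y ω)]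
          refine lintegral_congr fun c => ?_
          congr 3
          ring


/-- For exposures `X = (V ∘ Z)⁺`, `Y = (U ∘ Z)⁺` with `Z` admitting a
density `f_Z` on `ℝ^D`, for a quantile-based exposure measure `ρ_m` with density `f_m`, and
exponents `1 ≤ r, q < ∞`, `p = rq`, with conjugates `r', q'`,
`|ρ_m(X) - ρ_m(Y)| ≤ ‖V - U‖_{L^p} ‖f_Z‖_{L^{q'}}^{1/r} ‖f_m‖_{L^{r'}(0,1)}`. -/
theorem rhoM_le_Lp_bound
    {Ω : Type*} [MeasurableSpace Ω] (P : Measure Ω) [IsProbabilityMeasure P]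
    {D : ℕ} (Z : Ω → (Fin D → ℝ)) (hZ : Measurable Z)
    (V U : (Fin D → ℝ) → ℝ) (hV : Measurable V) (hU : Measurable U)
    (fZ : (Fin D → ℝ) → ℝ) (hfZmeas : Measurable fZ) (hfZ0 : ∀ z, 0 ≤ fZ z)
    (hdens : Measure.map Z P = volume.withDensity (fun z => ENNReal.ofReal (fZ z)))
    (fm : ℝ → ℝ) (hfmmeas : Measurable fm) (hfm0 : ∀ u, 0 ≤ fm u)
    (hfm1 : ∫ u in Set.Ioo (0 : ℝ) 1, fm u = 1)
    (r q : ℝ) (hr : 1 ≤ r) (hq : 1 ≤ q)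
    (r' q' : ℝ≥0∞)
    (hr' : 1 / ENNReal.ofReal r + 1 / r' = 1)
    (hq' : 1 / ENNReal.ofReal q + 1 / q' = 1)
    (hXint : Integrable
      (fun u => quantileFun (Measure.map (fun ω => max (V (Z ω)) 0) P) u * fm u)
      (volume.restrict (Set.Ioo (0 : ℝ) 1)))
    (hYint : Integrable
      (fun u => quantileFun (Measure.map (fun ω => max (U (Z ω)) 0) P) u * fm u)
      (volume.restrict (Set.Ioo (0 : ℝ) 1)))
    (hVUfin : eLpNorm (fun z => V z - U z) (ENNReal.ofReal (r * q)) volume < ⊤)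
    (hfZfin : eLpNorm fZ q' volume < ⊤)
    (hfmfin : eLpNorm fm r' (volume.restrict (Set.Ioo (0 : ℝ) 1)) < ⊤) :
    ENNReal.ofReal
        |rhoM P fm (fun ω => max (V (Z ω)) 0) - rhoM P fm (fun ω => max (U (Z ω)) 0)|
      ≤ eLpNorm (fun z => V z - U z) (ENNReal.ofReal (r * q)) volume
          * eLpNorm fZ q' volume ^ (1 / r)
          * eLpNorm fm r' (volume.restrict (Set.Ioo (0 : ℝ) 1)) := by
  have hr0 : (0:ℝ) < r := by linarith
  have hq0 : (0:ℝ) < q := by linarith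
  set X : Ω → ℝ := fun ω => max (V (Z ω)) 0 with hXdef
  set Y : Ω → ℝ := fun ω => max (U (Z ω)) 0 with hYdef
  have hXm : Measurable X := (hV.comp hZ).max measurable_const
  have hYm : Measurable Y := (hU.comp hZ).max measurable_const
  haveI : IsProbabilityMeasure (Measure.map X P) := Measure.isProbabilityMeasure_map hXm.aemeasurable
  haveI : IsProbabilityMeasure (Measure.map Y P) := Measure.isProbabilityMeasure_map hYm.aemeasurable
  set QX : ℝ → ℝ := quantileFun (Measure.map X P) with hQX
  set QY : ℝ → ℝ := quantileFun (Measure.map Y P) with hQY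
  set ΔQ : ℝ → ℝ := fun u => QX u - QY u with hΔQ
  set Res := volume.restrict (Set.Ioo (0:ℝ) 1) with hRes
  -- measurable representative of ΔQ
  have haeX := quantileRep_ae_eq (μ := Measure.map X P)
  have haeY := quantileRep_ae_eq (μ := Measure.map Y P)
  have hΔae : (fun u => quantileRep (Measure.map X P) u - quantileRep (Measure.map Y P) u)
      =ᵐ[Res] ΔQ := by
    filter_upwards [haeX, haeY] with u h1 h2
    simp only [hΔQ, hQX, hQY, h1, h2]
  have hΔQsm : AEStronglyMeasurable ΔQ Res :=
    ((measurable_quantileRep.sub measurable_quantileRep).aestronglyMeasurable).congr hΔae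
  -- Step 1
  have hIntD : Integrable (fun u => ΔQ u * fm u) Res := by
    have h := hXint.sub hYint
    refine h.congr (Filter.Eventually.of_forall fun u => ?_)
    simp only [hΔQ, hQX, hQY, Pi.sub_apply]
    ring
  have step1 : ENNReal.ofReal |rhoM P fm X - rhoM P fm Y|
      ≤ ∫⁻ u, ENNReal.ofReal (|ΔQ u * fm u|) ∂ Res := by
    have hsub : rhoM P fm X - rhoM P fm Y = ∫ u, ΔQ u * fm u ∂ Res := by
      rw [rhoM, rhoM, ← integral_sub hXint hYint]
      refine integral_congr_ae (Filter.Eventually.of_forall fun u => ?_)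
      simp only [hΔQ, hQX, hQY]
      ring
    rw [hsub]
    calc ENNReal.ofReal |∫ u, ΔQ u * fm u ∂ Res|
        ≤ ENNReal.ofReal (∫ u, |ΔQ u * fm u| ∂ Res) := by
          refine ENNReal.ofReal_le_ofReal ?_
          have hni := norm_integral_le_integral_norm (μ := Res) (fun u => ΔQ u * fm u)
          simpa only [Real.norm_eq_abs] using hni
      _ = ∫⁻ u, ENNReal.ofReal (|ΔQ u * fm u|) ∂ Res :=
          ofReal_integral_eq_lintegral_ofReal hIntD.abs
            (Filter.Eventually.of_forall fun u => abs_nonneg _)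
  -- Step 2 : Hölder on (0,1)
  have step2 : ∫⁻ u, ENNReal.ofReal (|ΔQ u * fm u|) ∂ Res
      ≤ eLpNorm ΔQ (ENNReal.ofReal r) Res * eLpNorm fm r' Res := by
    have h1 : ∫⁻ u, ENNReal.ofReal (|ΔQ u * fm u|) ∂ Res
        = eLpNorm (fun u => ΔQ u * fm u) 1 Res := by
      rw [eLpNorm_one_eq_lintegral_enorm]
      refine lintegral_congr fun u => ?_
      rw [Real.enorm_eq_ofReal_abs]
    rw [h1]
    haveI : ENNReal.HolderTriple (ENNReal.ofReal r) r' 1 := ⟨by simpa [one_div] using hr'⟩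
    simpa only [ENNReal.coe_one, one_mul] using eLpNorm_le_eLpNorm_mul_eLpNorm_of_nnnorm hΔQsm
      hfmmeas.aestronglyMeasurable (fun a b => a * b) 1
      (Filter.Eventually.of_forall fun u => by simp [nnnorm_mul])
  -- Step 3 : rewrite eLpNorm of ΔQ
  have hofr0 : ENNReal.ofReal r ≠ 0 := by
    simp only [ne_eq, ENNReal.ofReal_eq_zero, not_le]
    exact hr0
  have step3 : eLpNorm ΔQ (ENNReal.ofReal r) Res
      = (∫⁻ u, ENNReal.ofReal (|ΔQ u| ^ r) ∂ Res) ^ (1 / r) := by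
    rw [eLpNorm_eq_lintegral_rpow_enorm_toReal hofr0 ENNReal.ofReal_ne_top,
      ENNReal.toReal_ofReal hr0.le]
    congr 1
    refine lintegral_congr fun u => ?_
    rw [Real.enorm_eq_ofReal_abs, ← ENNReal.ofReal_rpow_of_nonneg (abs_nonneg _) hr0.le]
  -- Step 4 : Wasserstein bound
  have step4 : ∫⁻ u, ENNReal.ofReal (|ΔQ u| ^ r) ∂ Res
      ≤ ∫⁻ ω, ENNReal.ofReal (|X ω - Y ω| ^ r) ∂P :=
    quantile_lr_le P X Y hXm hYm hr
  -- Step 5 : transfer to density and Hölder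
  have step5 : ∫⁻ ω, ENNReal.ofReal (|X ω - Y ω| ^ r) ∂P
      ≤ eLpNorm (fun z => V z - U z) (ENNReal.ofReal (r * q)) volume ^ r
        * eLpNorm fZ q' volume := by
    have habs : ∀ z, |max (V z) 0 - max (U z) 0| ≤ |V z - U z| := by
      intro z
      exact abs_max_sub_max_le_abs _ _ _
    have hmeas1 : Measurable fun z => ENNReal.ofReal (|max (V z) 0 - max (U z) 0| ^ r) :=
      (((hV.max measurable_const).sub (hU.max measurable_const)).abs.pow
        measurable_const).ennreal_ofReal
    calc ∫⁻ ω, ENNReal.ofReal (|X ω - Y ω| ^ r) ∂P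
        = ∫⁻ z, ENNReal.ofReal (|max (V z) 0 - max (U z) 0| ^ r) ∂(Measure.map Z P) := by
          rw [lintegral_map hmeas1 hZ]
      _ = ∫⁻ z, ENNReal.ofReal (fZ z) * ENNReal.ofReal (|max (V z) 0 - max (U z) 0| ^ r) := by
          rw [hdens, lintegral_withDensity_eq_lintegral_mul _ hfZmeas.ennreal_ofReal hmeas1]
          rfl
      _ ≤ ∫⁻ z, ENNReal.ofReal (fZ z) * ENNReal.ofReal (|V z - U z| ^ r) := by
          refine lintegral_mono fun z => ?_
          refine mul_le_mul_right (ENNReal.ofReal_le_ofReal ?_) _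
          exact Real.rpow_le_rpow (abs_nonneg _) (habs z) hr0.le
      _ = ∫⁻ z, ENNReal.ofReal (|V z - U z| ^ r * fZ z) := by
          refine lintegral_congr fun z => ?_
          rw [← ENNReal.ofReal_mul (hfZ0 z), mul_comm]
      _ = eLpNorm (fun z => |V z - U z| ^ r * fZ z) 1 volume := by
          rw [eLpNorm_one_eq_lintegral_enorm]
          refine lintegral_congr fun z => ?_
          rw [Real.enorm_eq_ofReal_abs, abs_of_nonneg
            (mul_nonneg (Real.rpow_nonneg (abs_nonneg _) r) (hfZ0 z))]
      _ ≤ eLpNorm (fun z => |V z - U z| ^ r) (ENNReal.ofReal q) volume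
            * eLpNorm fZ q' volume := by
          haveI : ENNReal.HolderTriple (ENNReal.ofReal q) q' 1 := ⟨by simpa [one_div] using hq'⟩
          simpa only [ENNReal.coe_one, one_mul, Pi.sub_apply] using eLpNorm_le_eLpNorm_mul_eLpNorm_of_nnnorm
            ((((hV.sub hU).abs.pow measurable_const)).aestronglyMeasurable)
            hfZmeas.aestronglyMeasurable (fun a b => a * b) 1
            (Filter.Eventually.of_forall fun z => by simp [nnnorm_mul])
      _ = eLpNorm (fun z => V z - U z) (ENNReal.ofReal (r * q)) volume ^ r
            * eLpNorm fZ q' volume := by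
          congr 1
          have := eLpNorm_norm_rpow (fun z => V z - U z) hr0 (p := ENNReal.ofReal q)
            (μ := volume)
          simp only [Real.norm_eq_abs] at this
          rw [this, ← ENNReal.ofReal_mul hq0.le, mul_comm q r]
  -- Combine steps 3–5
  have step6 : eLpNorm ΔQ (ENNReal.ofReal r) Res
      ≤ eLpNorm (fun z => V z - U z) (ENNReal.ofReal (r * q)) volume
        * eLpNorm fZ q' volume ^ (1 / r) := by
    rw [step3]
    calc (∫⁻ u, ENNReal.ofReal (|ΔQ u| ^ r) ∂ Res) ^ (1 / r)
        ≤ (eLpNorm (fun z => V z - U z) (ENNReal.ofReal (r * q)) volume ^ r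
            * eLpNorm fZ q' volume) ^ (1 / r) :=
          ENNReal.rpow_le_rpow (le_trans step4 step5) (by positivity)
      _ = eLpNorm (fun z => V z - U z) (ENNReal.ofReal (r * q)) volume
            * eLpNorm fZ q' volume ^ (1 / r) := by
          rw [ENNReal.mul_rpow_of_nonneg _ _ (by positivity), ← ENNReal.rpow_mul,
            mul_one_div, div_self hr0.ne', ENNReal.rpow_one]
  calc ENNReal.ofReal |rhoM P fm X - rhoM P fm Y|
      ≤ eLpNorm ΔQ (ENNReal.ofReal r) Res * eLpNorm fm r' Res := le_trans step1 step2
    _ ≤ eLpNorm (fun z => V z - U z) (ENNReal.ofReal (r * q)) volume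
          * eLpNorm fZ q' volume ^ (1 / r) * eLpNorm fm r' Res :=
        mul_le_mul_left step6 _
end

section
/- Let X and Y be real-valued random variables defined on the same probability space, with quantile functions Q_X(u) = inf{x : P(X ≤ x) ≥ u} and Q_Y(u) = inf{x : P(Y ≤ x) ≥ u}. Then for every r with 1 ≤ r < ∞, ∫_0^1 |Q_X(u) − Q_Y(u)|^r du ≤ E[|X − Y|^r]. -/
open MeasureTheory
open scoped ENNReal NNReal

namespace WQC

open Set

/-! ### The auxiliary kernel `phi` -/

noncomputable def phi (r s y : ℝ) : ℝ := if s < y then r * (y - s) ^ (r - 1) else 0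

lemma phi_nonneg {r : ℝ} (hr : 1 ≤ r) (s y : ℝ) : 0 ≤ phi r s y := by
  unfold phi
  split_ifs with h
  · exact mul_nonneg (by linarith) (Real.rpow_nonneg (by linarith) _)
  · exact le_refl 0

lemma measurable_phi {r : ℝ} (hr : 1 ≤ r) : Measurable (fun p : ℝ × ℝ => phi r p.1 p.2) := by
  unfold phi
  refine Measurable.ite (measurableSet_lt measurable_fst measurable_snd) ?_ measurable_const
  exact measurable_const.mul
    ((Real.continuous_rpow_const (by linarith : (0:ℝ) ≤ r - 1)).measurable.comp
      (measurable_snd.sub measurable_fst))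

/-! ### One-dimensional layer-cake facts -/

lemma lintegral_ite_lt (c : ℝ) :
    (∫⁻ l in Set.Ioi (0:ℝ), (if l < c then (1:ℝ≥0∞) else 0)) = ENNReal.ofReal c := by
  have h : (fun l : ℝ => if l < c then (1:ℝ≥0∞) else 0)
      = (Set.Iio c).indicator (fun _ => (1:ℝ≥0∞)) := by
    funext l; simp [Set.indicator_apply, Set.mem_Iio]
  rw [h, lintegral_indicator measurableSet_Iio, setLIntegral_one,
    Measure.restrict_apply measurableSet_Iio, Set.Iio_inter_Ioi, Real.volume_Ioo, sub_zero]

lemma lintegral_phi {r : ℝ} (hr : 1 ≤ r) (a b : ℝ) :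
    (∫⁻ s : ℝ, (if a ≤ s then ENNReal.ofReal (phi r s b) else 0))
      = ENNReal.ofReal (max (b - a) 0 ^ r) := by
  have hr0 : (0:ℝ) < r := by linarith
  have hstep : (fun s : ℝ => if a ≤ s then ENNReal.ofReal (phi r s b) else 0)
      = (Set.Ico a b).indicator (fun s => ENNReal.ofReal (r * (b - s) ^ (r - 1))) := by
    funext s
    by_cases h1 : a ≤ s <;> by_cases h2 : s < b <;>
      simp [phi, Set.indicator_apply, Set.mem_Ico, h1, h2]
  rw [hstep, lintegral_indicator measurableSet_Ico]
  rcases le_or_gt b a with h | h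
  · rw [Set.Ico_eq_empty (not_lt.mpr h)]
    simp [max_eq_right (sub_nonpos.mpr h), Real.zero_rpow hr0.ne']
  · have hmax : max (b - a) 0 = b - a := max_eq_left (by linarith)
    have hcont : Continuous (fun s : ℝ => r * (b - s) ^ (r - 1)) :=
      continuous_const.mul ((Real.continuous_rpow_const (by linarith : (0:ℝ) ≤ r - 1)).comp
        (continuous_const.sub continuous_id))
    have hint : IntegrableOn (fun s : ℝ => r * (b - s) ^ (r - 1)) (Set.Ico a b) :=
      (hcont.continuousOn.integrableOn_Icc).mono_set Set.Ico_subset_Icc_self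
    have hnn : 0 ≤ᵐ[volume.restrict (Set.Ico a b)] fun s : ℝ => r * (b - s) ^ (r - 1) := by
      filter_upwards [ae_restrict_mem measurableSet_Ico] with s hs
      exact mul_nonneg hr0.le (Real.rpow_nonneg (by linarith [hs.2]) _)
    rw [← ofReal_integral_eq_lintegral_ofReal hint hnn]
    have h1 : (∫ s in Set.Ico a b, r * (b - s) ^ (r - 1))
        = ∫ s in a..b, r * (b - s) ^ (r - 1) := by
      rw [intervalIntegral.integral_of_le h.le, integral_Ico_eq_integral_Ioo,
        integral_Ioc_eq_integral_Ioo]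
    have h2 : (∫ s in a..b, r * (b - s) ^ (r - 1))
        = r * ∫ s in a..b, (b - s) ^ (r - 1) := intervalIntegral.integral_const_mul _ _
    have h3 : (∫ s in a..b, (b - s) ^ (r - 1)) = ∫ t in (0:ℝ)..(b - a), t ^ (r - 1) := by
      rw [intervalIntegral.integral_comp_sub_left (fun t => t ^ (r - 1)) b, sub_self]
    have h4 : (∫ t in (0:ℝ)..(b - a), t ^ (r - 1)) = (b - a) ^ r / r := by
      rw [integral_rpow (Or.inl (by linarith : (-1:ℝ) < r - 1))]
      rw [Real.zero_rpow (by linarith : r - 1 + 1 ≠ 0), sub_add_cancel, sub_zero]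
    rw [h1, h2, h3, h4, hmax]
    congr 1
    field_simp

/-! ### The double layer-cake representation -/

lemma half_rep {α : Type*} [MeasurableSpace α] (ν : Measure α) [SFinite ν]
    {V W : α → ℝ} (hV : Measurable V) (hW : Measurable W) {r : ℝ} (hr : 1 ≤ r) :
    (∫⁻ x, ENNReal.ofReal (max (W x - V x) 0 ^ r) ∂ν)
      = ∫⁻ s : ℝ, ∫⁻ l in Set.Ioi (0:ℝ), ν {y | V y ≤ s ∧ l < phi r s (W y)} := by
  have hφ := measurable_phi hr
  have step1 : ∀ x, ENNReal.ofReal (max (W x - V x) 0 ^ r)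
      = ∫⁻ s : ℝ, (if V x ≤ s then ENNReal.ofReal (phi r s (W x)) else 0) :=
    fun x => (lintegral_phi hr (V x) (W x)).symm
  rw [lintegral_congr step1]
  have hm1 : Measurable (fun p : α × ℝ =>
      if V p.1 ≤ p.2 then ENNReal.ofReal (phi r p.2 (W p.1)) else 0) := by
    refine Measurable.ite (measurableSet_le (hV.comp measurable_fst) measurable_snd) ?_
      measurable_const
    exact ENNReal.measurable_ofReal.comp (hφ.comp (measurable_snd.prodMk
      (hW.comp measurable_fst)))
  rw [lintegral_lintegral_swap hm1.aemeasurable]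
  refine lintegral_congr fun s => ?_
  have hφs : Measurable (fun y : ℝ => phi r s y) :=
    hφ.comp (measurable_const.prodMk measurable_id)
  have step2 : ∀ x, (if V x ≤ s then ENNReal.ofReal (phi r s (W x)) else 0)
      = ∫⁻ l in Set.Ioi (0:ℝ), (if V x ≤ s ∧ l < phi r s (W x) then (1:ℝ≥0∞) else 0) := by
    intro x
    by_cases h : V x ≤ s
    · simp only [h, if_true, true_and]
      exact (lintegral_ite_lt _).symm
    · simp only [h, if_false, false_and]
      simp
  rw [lintegral_congr step2]
  have hm2 : Measurable (fun p : α × ℝ =>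
      if V p.1 ≤ s ∧ p.2 < phi r s (W p.1) then (1:ℝ≥0∞) else 0) := by
    refine Measurable.ite ?_ measurable_const measurable_const
    have : {p : α × ℝ | V p.1 ≤ s ∧ p.2 < phi r s (W p.1)}
        = {p : α × ℝ | V p.1 ≤ s} ∩ {p : α × ℝ | p.2 < phi r s (W p.1)} := rfl
    rw [this]
    exact (measurableSet_le (hV.comp measurable_fst) measurable_const).inter
      (measurableSet_lt measurable_snd ((hφs.comp hW).comp measurable_fst))
  rw [lintegral_lintegral_swap hm2.aemeasurable]
  refine lintegral_congr fun l => ?_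
  have hS : MeasurableSet {y | V y ≤ s ∧ l < phi r s (W y)} := by
    have : {y | V y ≤ s ∧ l < phi r s (W y)}
        = {y | V y ≤ s} ∩ {y | l < phi r s (W y)} := rfl
    rw [this]
    exact (measurableSet_le hV measurable_const).inter
      (measurableSet_lt measurable_const (hφs.comp hW))
  rw [← lintegral_indicator_one hS]
  refine lintegral_congr fun x => ?_
  simp [Set.indicator_apply, Set.mem_setOf_eq]

/-! ### Quantile function facts -/

section Quantile

variable (μ : Measure ℝ) [IsProbabilityMeasure μ]

lemma F_mono : Monotone (fun x : ℝ => (μ (Set.Iic x)).toReal) := fun x y h =>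
  ENNReal.toReal_mono (measure_ne_top μ _) (measure_mono (Set.Iic_subset_Iic.mpr h))

lemma S_nonempty {u : ℝ} (h0 : 0 < u) (h1 : u < 1) :
    {x : ℝ | u ≤ (μ (Set.Iic x)).toReal}.Nonempty := by
  have hU : (⨆ n : ℕ, μ (Set.Iic (n : ℝ))) = μ Set.univ := by
    rw [← Monotone.measure_iUnion (fun m n h => Set.Iic_subset_Iic.mpr (by exact_mod_cast h))]
    congr 1
    ext x
    simp only [Set.mem_iUnion, Set.mem_Iic, Set.mem_univ, iff_true]
    exact exists_nat_ge x
  have hlt : ENNReal.ofReal u < ⨆ n : ℕ, μ (Set.Iic (n:ℝ)) := by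
    rw [hU, measure_univ]
    exact ENNReal.ofReal_lt_one.mpr h1
  obtain ⟨n, hn⟩ := lt_iSup_iff.mp hlt
  exact ⟨(n:ℝ), ((ENNReal.ofReal_lt_iff_lt_toReal h0.le (measure_ne_top μ _)).mp hn).le⟩

lemma S_bddBelow {u : ℝ} (h0 : 0 < u) :
    BddBelow {x : ℝ | u ≤ (μ (Set.Iic x)).toReal} := by
  have hempty : (⋂ n : ℕ, Set.Iic (-(n:ℝ))) = ∅ := by
    ext x
    simp only [Set.mem_iInter, Set.mem_Iic, Set.mem_empty_iff_false, iff_false]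
    push_neg
    obtain ⟨n, hn⟩ := exists_nat_gt (-x)
    exact ⟨n, by linarith⟩
  have hI : (⨅ n : ℕ, μ (Set.Iic (-(n:ℝ)))) = 0 := by
    rw [← Antitone.measure_iInter
      (fun m n h => Set.Iic_subset_Iic.mpr (by simp; exact_mod_cast h))
      (fun n => measurableSet_Iic.nullMeasurableSet) ⟨0, measure_ne_top μ _⟩]
    rw [hempty, measure_empty]
  have hlt : (⨅ n : ℕ, μ (Set.Iic (-(n:ℝ)))) < ENNReal.ofReal u := by
    rw [hI]; exact ENNReal.ofReal_pos.mpr h0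
  obtain ⟨n, hn⟩ := iInf_lt_iff.mp hlt
  refine ⟨-(n:ℝ), fun x hx => ?_⟩
  by_contra hc
  push_neg at hc
  have h2 : (μ (Set.Iic x)).toReal ≤ (μ (Set.Iic (-(n:ℝ)))).toReal :=
    F_mono μ hc.le
  have h3 : (μ (Set.Iic (-(n:ℝ)))).toReal < u :=
    (ENNReal.lt_ofReal_iff_toReal_lt (measure_ne_top μ _)).mp hn
  have := hx
  simp only [Set.mem_setOf_eq] at this
  linarith

lemma quantile_mem {u : ℝ} (h0 : 0 < u) (h1 : u < 1) :
    u ≤ (μ (Set.Iic (quantileFun μ u))).toReal := by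
  set S := {x : ℝ | u ≤ (μ (Set.Iic x)).toReal} with hS
  have hne : S.Nonempty := S_nonempty μ h0 h1
  set q := sInf S with hq
  have hub : ∀ n : ℕ, ENNReal.ofReal u ≤ μ (Set.Iic (q + 1/((n:ℝ)+1))) := by
    intro n
    obtain ⟨x, hxS, hxlt⟩ := exists_lt_of_csInf_lt hne
      (lt_add_of_pos_right q (by positivity : (0:ℝ) < 1/((n:ℝ)+1)))
    have : u ≤ (μ (Set.Iic (q + 1/((n:ℝ)+1)))).toReal :=
      le_trans hxS (F_mono μ hxlt.le)
    exact ENNReal.ofReal_le_of_le_toReal this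
  have hIic : Set.Iic q = ⋂ n : ℕ, Set.Iic (q + 1/((n:ℝ)+1)) := by
    ext x
    simp only [Set.mem_Iic, Set.mem_iInter]
    constructor
    · intro h n; have : (0:ℝ) < 1/((n:ℝ)+1) := by positivity
      linarith
    · intro h
      by_contra hc
      push_neg at hc
      obtain ⟨n, hn⟩ := exists_nat_one_div_lt (by linarith : (0:ℝ) < x - q)
      have := h n
      linarith
  have hanti : Antitone (fun n : ℕ => Set.Iic (q + 1/((n:ℝ)+1))) := by
    intro m n h
    refine Set.Iic_subset_Iic.mpr ?_
    have : 1/((n:ℝ)+1) ≤ 1/((m:ℝ)+1) := by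
      apply one_div_le_one_div_of_le (by positivity)
      exact_mod_cast Nat.add_le_add_right h 1
    linarith
  have hkey : ENNReal.ofReal u ≤ μ (Set.Iic q) := by
    rw [hIic, Antitone.measure_iInter hanti
      (fun n => measurableSet_Iic.nullMeasurableSet) ⟨0, measure_ne_top μ _⟩]
    exact le_iInf hub
  exact (ENNReal.ofReal_le_iff_le_toReal (measure_ne_top μ _)).mp hkey

lemma quantile_le_iff {u : ℝ} (h0 : 0 < u) (h1 : u < 1) (s : ℝ) :
    quantileFun μ u ≤ s ↔ u ≤ (μ (Set.Iic s)).toReal := by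
  constructor
  · intro h
    exact le_trans (quantile_mem μ h0 h1) (F_mono μ h)
  · intro h
    exact csInf_le (S_bddBelow μ h0) h

lemma lt_quantile_iff {u : ℝ} (h0 : 0 < u) (h1 : u < 1) (c : ℝ) :
    c < quantileFun μ u ↔ (μ (Set.Iic c)).toReal < u := by
  rw [← not_le, ← not_le]
  exact not_congr (quantile_le_iff μ h0 h1 c)

end Quantile

open Classical in
noncomputable def qtrunc (μ : Measure ℝ) (u : ℝ) : ℝ :=
  if 0 < u ∧ u < 1 then quantileFun μ u else 0

lemma qtrunc_eq (μ : Measure ℝ) {u : ℝ} (h0 : 0 < u) (h1 : u < 1) :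
    qtrunc μ u = quantileFun μ u := by
  rw [qtrunc, if_pos ⟨h0, h1⟩]

lemma measurable_qtrunc (μ : Measure ℝ) [IsProbabilityMeasure μ] :
    Measurable (qtrunc μ) := by
  apply measurable_of_Iic
  intro t
  have hrw : qtrunc μ ⁻¹' Set.Iic t
      = (Set.Ioo 0 1 ∩ Set.Iic ((μ (Set.Iic t)).toReal))
        ∪ ((Set.Ioo (0:ℝ) 1)ᶜ ∩ {u : ℝ | (0:ℝ) ≤ t}) := by
    ext u
    by_cases hu : 0 < u ∧ u < 1
    · simp only [Set.mem_preimage, Set.mem_Iic, qtrunc, if_pos hu, Set.mem_union,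
        Set.mem_inter_iff, Set.mem_Ioo, Set.mem_compl_iff, Set.mem_setOf_eq,
        quantile_le_iff μ hu.1 hu.2 t]
      constructor
      · intro h; exact Or.inl ⟨hu, h⟩
      · rintro (⟨_, h⟩ | ⟨h, _⟩)
        · exact h
        · exact absurd hu h
    · simp only [Set.mem_preimage, Set.mem_Iic, qtrunc, if_neg hu, Set.mem_union,
        Set.mem_inter_iff, Set.mem_Ioo, Set.mem_compl_iff, Set.mem_setOf_eq]
      constructor
      · intro h; exact Or.inr ⟨hu, h⟩
      · rintro (⟨h, _⟩ | ⟨_, h⟩)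
        · exact absurd h hu
        · exact h
  rw [hrw]
  exact (measurableSet_Ioo.inter measurableSet_Iic).union
    (measurableSet_Ioo.compl.inter (MeasurableSet.const _))

/-! ### The key coupling inequality -/

lemma key_ineq {Ω : Type*} [MeasurableSpace Ω] (P : Measure Ω) [IsProbabilityMeasure P]
    {X Y : Ω → ℝ} (hX : Measurable X) (hY : Measurable Y) (s c : ℝ) :
    (volume.restrict (Set.Ioo (0:ℝ) 1))
        {u | qtrunc (P.map X) u ≤ s ∧ c < qtrunc (P.map Y) u}
      ≤ P {ω | X ω ≤ s ∧ c < Y ω} := by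
  haveI : IsProbabilityMeasure (P.map X) := Measure.isProbabilityMeasure_map hX.aemeasurable
  haveI : IsProbabilityMeasure (P.map Y) := Measure.isProbabilityMeasure_map hY.aemeasurable
  rw [Measure.restrict_apply' measurableSet_Ioo]
  set FX : ℝ := ((P.map X) (Set.Iic s)).toReal with hFX
  set FY : ℝ := ((P.map Y) (Set.Iic c)).toReal with hFY
  have hsub : {u | qtrunc (P.map X) u ≤ s ∧ c < qtrunc (P.map Y) u} ∩ Set.Ioo 0 1
      ⊆ Set.Ioc FY FX := by
    rintro u ⟨⟨h1, h2⟩, hu⟩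
    rw [qtrunc_eq _ hu.1 hu.2] at h1 h2
    exact ⟨(lt_quantile_iff (P.map Y) hu.1 hu.2 c).mp h2,
      (quantile_le_iff (P.map X) hu.1 hu.2 s).mp h1⟩
  refine le_trans (measure_mono hsub) ?_
  rw [Real.volume_Ioc]
  have h1 : (P.map X) (Set.Iic s) ≤ P {ω | X ω ≤ s ∧ c < Y ω} + (P.map Y) (Set.Iic c) := by
    rw [Measure.map_apply hX measurableSet_Iic, Measure.map_apply hY measurableSet_Iic]
    refine le_trans (measure_mono ?_) (measure_union_le _ _)
    intro ω hω
    by_cases h : c < Y ω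
    · exact Or.inl ⟨hω, h⟩
    · exact Or.inr (not_lt.mp h)
  have h2 : ENNReal.ofReal (FX - FY) ≤ (P.map X) (Set.Iic s) - (P.map Y) (Set.Iic c) := by
    rw [hFX, hFY, ENNReal.ofReal_sub _ ENNReal.toReal_nonneg,
      ENNReal.ofReal_toReal (measure_ne_top _ _), ENNReal.ofReal_toReal (measure_ne_top _ _)]
  exact le_trans h2 (tsub_le_iff_right.mpr h1)

/-! ### Identifying super-level sets of `phi` -/

lemma phi_upper {r : ℝ} (hr : 1 ≤ r) (s l : ℝ) (hl : 0 ≤ l) :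
    {y : ℝ | l < phi r s y} = ∅ ∨ ∃ c, {y : ℝ | l < phi r s y} = Set.Ioi c := by
  rcases eq_or_lt_of_le hr with h1 | h1
  · -- r = 1
    rcases lt_or_ge l 1 with hl1 | hl1
    · right
      refine ⟨s, ?_⟩
      ext y
      simp only [Set.mem_setOf_eq, Set.mem_Ioi, phi, ← h1]
      by_cases h : s < y
      · simp [h, Real.rpow_zero, hl1]
      · simp [h, not_lt.mpr hl]
    · left
      ext y
      simp only [Set.mem_setOf_eq, Set.mem_empty_iff_false, iff_false, not_lt, phi, ← h1]
      by_cases h : s < y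
      · simp [h, Real.rpow_zero]; linarith
      · simp [h]; linarith
  · right
    have hr0 : (0:ℝ) < r := by linarith
    have hp : (0:ℝ) < r - 1 := by linarith
    refine ⟨s + (l / r) ^ (r - 1)⁻¹, ?_⟩
    have hlr : (0:ℝ) ≤ l / r := div_nonneg hl hr0.le
    ext y
    simp only [Set.mem_setOf_eq, Set.mem_Ioi]
    constructor
    · intro h
      have hy : s < y := by
        by_contra hc
        rw [phi, if_neg hc] at h
        exact absurd h (not_lt.mpr hl)
      rw [phi, if_pos hy] at h
      have h2 : l / r < (y - s) ^ (r - 1) := (div_lt_iff₀ hr0).mpr (by linarith)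
      have h3 : (l / r) ^ (r - 1)⁻¹ < y - s := by
        rw [Real.rpow_inv_lt_iff_of_pos hlr (by linarith) hp]
        exact h2
      linarith
    · intro h
      have hys : s < y :=
        lt_of_le_of_lt (le_add_of_nonneg_right (Real.rpow_nonneg hlr _)) h
      rw [phi, if_pos hys]
      have h3 : (l / r) ^ (r - 1)⁻¹ < y - s := by linarith
      have h2 : l / r < (y - s) ^ (r - 1) :=
        (Real.rpow_inv_lt_iff_of_pos hlr (by linarith) hp).mp h3
      have := (div_lt_iff₀ hr0).mp h2
      linarith

/-! ### The master per-`(s, l)` inequality -/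

lemma master {Ω : Type*} [MeasurableSpace Ω] (P : Measure Ω) [IsProbabilityMeasure P]
    {X Y : Ω → ℝ} (hX : Measurable X) (hY : Measurable Y) {r : ℝ} (hr : 1 ≤ r)
    (s l : ℝ) (hl : 0 ≤ l) :
    (volume.restrict (Set.Ioo (0:ℝ) 1))
        {u | qtrunc (P.map X) u ≤ s ∧ l < phi r s (qtrunc (P.map Y) u)}
      ≤ P {ω | X ω ≤ s ∧ l < phi r s (Y ω)} := by
  rcases phi_upper hr s l hl with h | ⟨c, hc⟩
  · have he : {u | qtrunc (P.map X) u ≤ s ∧ l < phi r s (qtrunc (P.map Y) u)} = ∅ := by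
      ext u
      simp only [Set.mem_setOf_eq, Set.mem_empty_iff_false, iff_false, not_and]
      intro _ h2
      have : qtrunc (P.map Y) u ∈ {y : ℝ | l < phi r s y} := h2
      rw [h] at this
      exact this
    rw [he]
    simp
  · have hmem : ∀ y : ℝ, (l < phi r s y) ↔ c < y := by
      intro y
      have := Set.ext_iff.mp hc y
      simpa [Set.mem_setOf_eq, Set.mem_Ioi] using this
    have e1 : {u | qtrunc (P.map X) u ≤ s ∧ l < phi r s (qtrunc (P.map Y) u)}
        = {u | qtrunc (P.map X) u ≤ s ∧ c < qtrunc (P.map Y) u} := by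
      ext u; rw [Set.mem_setOf_eq, Set.mem_setOf_eq, hmem]
    have e2 : {ω | X ω ≤ s ∧ l < phi r s (Y ω)} = {ω | X ω ≤ s ∧ c < Y ω} := by
      ext ω; rw [Set.mem_setOf_eq, Set.mem_setOf_eq, hmem]
    rw [e1, e2]
    exact key_ineq P hX hY s c

lemma hmax_meas {β : Type*} [MeasurableSpace β] (r : ℝ) (hr0 : (0:ℝ) < r)
    (V W : β → ℝ) (hV : Measurable V) (hW : Measurable W) :
    Measurable (fun x => ENNReal.ofReal (max (W x - V x) 0 ^ r)) :=
  ENNReal.measurable_ofReal.comp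
    (((Real.continuous_rpow_const hr0.le).measurable).comp
      ((hW.sub hV).max measurable_const))

lemma hsplit {β : Type*} [MeasurableSpace β] (r : ℝ) (hr : 1 ≤ r) (m : Measure β)
    (V W : β → ℝ) (hV : Measurable V) (hW : Measurable W) :
    (∫⁻ x, ENNReal.ofReal (|V x - W x| ^ r) ∂m)
      = (∫⁻ x, ENNReal.ofReal (max (W x - V x) 0 ^ r) ∂m)
        + ∫⁻ x, ENNReal.ofReal (max (V x - W x) 0 ^ r) ∂m := by
  have hr0 : (0:ℝ) < r := by linarith
  have L0 : ∀ a b : ℝ, ENNReal.ofReal (|a - b| ^ r)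
      = ENNReal.ofReal (max (b - a) 0 ^ r) + ENNReal.ofReal (max (a - b) 0 ^ r) := by
    intro a b
    rcases le_total a b with h | h
    · rw [abs_of_nonpos (by linarith), max_eq_left (by linarith), max_eq_right (by linarith),
        neg_sub, Real.zero_rpow hr0.ne', ENNReal.ofReal_zero, add_zero]
    · rw [abs_of_nonneg (by linarith), max_eq_right (by linarith), max_eq_left (by linarith),
        Real.zero_rpow hr0.ne', ENNReal.ofReal_zero, zero_add]
  rw [lintegral_congr (fun x => L0 (V x) (W x))]
  exact lintegral_add_left (hmax_meas r hr0 V W hV hW) _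

end WQC

open WQC in
/-- For random variables `X, Y` on a common probability space and `1 ≤ r < ∞`,
`∫₀¹ |Q_X(u) - Q_Y(u)|^r du ≤ E[|X - Y|^r]` (the `r`-Wasserstein coupling bound). -/
theorem wasserstein_quantile_le_coupling
    {Ω : Type*} [MeasurableSpace Ω] (P : Measure Ω) [IsProbabilityMeasure P]
    (X Y : Ω → ℝ) (hX : Measurable X) (hY : Measurable Y)
    (r : ℝ) (hr : 1 ≤ r) :
    ∫⁻ u in Set.Ioo (0 : ℝ) 1,
        ENNReal.ofReal (|quantileFun (Measure.map X P) u - quantileFun (Measure.map Y P) u| ^ r)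
      ≤ ∫⁻ ω, ENNReal.ofReal (|X ω - Y ω| ^ r) ∂P := by
  have hr0 : (0:ℝ) < r := by linarith
  haveI : IsProbabilityMeasure (P.map X) := Measure.isProbabilityMeasure_map hX.aemeasurable
  haveI : IsProbabilityMeasure (P.map Y) := Measure.isProbabilityMeasure_map hY.aemeasurable
  set gX : ℝ → ℝ := qtrunc (P.map X) with hgXdef
  set gY : ℝ → ℝ := qtrunc (P.map Y) with hgYdef
  have hgX : Measurable gX := measurable_qtrunc (P.map X)
  have hgY : Measurable gY := measurable_qtrunc (P.map Y)
  set ν : Measure ℝ := volume.restrict (Set.Ioo (0:ℝ) 1) with hν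
  -- pointwise splitting of |a - b| ^ r
  have L0 : ∀ a b : ℝ, ENNReal.ofReal (|a - b| ^ r)
      = ENNReal.ofReal (max (b - a) 0 ^ r) + ENNReal.ofReal (max (a - b) 0 ^ r) := by
    intro a b
    rcases le_total a b with h | h
    · rw [abs_of_nonpos (by linarith), max_eq_left (by linarith), max_eq_right (by linarith),
        neg_sub, Real.zero_rpow hr0.ne', ENNReal.ofReal_zero, add_zero]
    · rw [abs_of_nonneg (by linarith), max_eq_right (by linarith), max_eq_left (by linarith),
        Real.zero_rpow hr0.ne', ENNReal.ofReal_zero, zero_add]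
  -- replace quantileFun by qtrunc on the left
  have congr0 : (∫⁻ u in Set.Ioo (0:ℝ) 1,
        ENNReal.ofReal (|quantileFun (Measure.map X P) u - quantileFun (Measure.map Y P) u| ^ r))
      = ∫⁻ u, ENNReal.ofReal (|gX u - gY u| ^ r) ∂ν := by
    refine setLIntegral_congr_fun measurableSet_Ioo (fun u hu => ?_)
    rw [hgXdef, hgYdef, qtrunc_eq _ hu.1 hu.2, qtrunc_eq _ hu.1 hu.2]
  -- the two comparison steps
  have comp1 : (∫⁻ s : ℝ, ∫⁻ l in Set.Ioi (0:ℝ), ν {y | gX y ≤ s ∧ l < phi r s (gY y)})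
      ≤ ∫⁻ s : ℝ, ∫⁻ l in Set.Ioi (0:ℝ), P {ω | X ω ≤ s ∧ l < phi r s (Y ω)} := by
    refine lintegral_mono fun s => ?_
    refine setLIntegral_mono (Antitone.measurable fun l l' h =>
      measure_mono fun ω hω => ⟨hω.1, lt_of_le_of_lt h hω.2⟩) fun l hl => ?_
    exact master P hX hY hr s l (le_of_lt hl)
  have comp2 : (∫⁻ s : ℝ, ∫⁻ l in Set.Ioi (0:ℝ), ν {y | gY y ≤ s ∧ l < phi r s (gX y)})
      ≤ ∫⁻ s : ℝ, ∫⁻ l in Set.Ioi (0:ℝ), P {ω | Y ω ≤ s ∧ l < phi r s (X ω)} := by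
    refine lintegral_mono fun s => ?_
    refine setLIntegral_mono (Antitone.measurable fun l l' h =>
      measure_mono fun ω hω => ⟨hω.1, lt_of_le_of_lt h hω.2⟩) fun l hl => ?_
    exact master P hY hX hr s l (le_of_lt hl)
  calc
    (∫⁻ u in Set.Ioo (0:ℝ) 1,
        ENNReal.ofReal (|quantileFun (Measure.map X P) u - quantileFun (Measure.map Y P) u| ^ r))
        = ∫⁻ u, ENNReal.ofReal (|gX u - gY u| ^ r) ∂ν := congr0
    _ = (∫⁻ u, ENNReal.ofReal (max (gY u - gX u) 0 ^ r) ∂ν)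
          + ∫⁻ u, ENNReal.ofReal (max (gX u - gY u) 0 ^ r) ∂ν := hsplit r hr ν gX gY hgX hgY
    _ = (∫⁻ s : ℝ, ∫⁻ l in Set.Ioi (0:ℝ), ν {y | gX y ≤ s ∧ l < phi r s (gY y)})
          + ∫⁻ s : ℝ, ∫⁻ l in Set.Ioi (0:ℝ), ν {y | gY y ≤ s ∧ l < phi r s (gX y)} := by
        rw [half_rep ν hgX hgY hr, half_rep ν hgY hgX hr]
    _ ≤ (∫⁻ s : ℝ, ∫⁻ l in Set.Ioi (0:ℝ), P {ω | X ω ≤ s ∧ l < phi r s (Y ω)})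
          + ∫⁻ s : ℝ, ∫⁻ l in Set.Ioi (0:ℝ), P {ω | Y ω ≤ s ∧ l < phi r s (X ω)} :=
        add_le_add comp1 comp2
    _ = (∫⁻ ω, ENNReal.ofReal (max (Y ω - X ω) 0 ^ r) ∂P)
          + ∫⁻ ω, ENNReal.ofReal (max (X ω - Y ω) 0 ^ r) ∂P := by
        rw [half_rep P hX hY hr, half_rep P hY hX hr]
    _ = ∫⁻ ω, ENNReal.ofReal (|X ω - Y ω| ^ r) ∂P := (hsplit r hr P X Y hX hY).symm
end

section
/- Let Z be a real-valued random variable with a continuous strictly increasing distribution function F_Z and density f_Z, and let V, U : ℝ → ℝ be nonnegative, increasing and continuous. Let m be a probability measure on (0,1) with density f_m, and ρ_m(W) = ∫_0^1 Q_W(u) m(du) with Q_W(u) = inf{x : P(W ≤ x) ≥ u}. Assuming all integrals involved are finite, ρ_m(V(Z)) − ρ_m(U(Z)) = ∫_{−∞}^{∞} (V(z) − U(z)) f_Z(z) f_m(F_Z(z)) dz. -/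
open MeasureTheory

open Set Filter Topology in
lemma quantileFun_eq {μ : Measure ℝ} {F : ℝ → ℝ}
    (hF : ∀ z, F z = (μ (Set.Iic z)).toReal) (hFmono : StrictMono F)
    {x u : ℝ} (hx : F x = u) : quantileFun μ u = x := by
  have hset : {y : ℝ | u ≤ (μ (Set.Iic y)).toReal} = Set.Ici x := by
    ext y
    simp only [Set.mem_setOf_eq, Set.mem_Ici, ← hF, ← hx, hFmono.le_iff_le]
  rw [quantileFun, hset, csInf_Ici]

open Set Filter Topology in
lemma exists_F_eq {μ : Measure ℝ} [IsProbabilityMeasure μ] {F : ℝ → ℝ}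
    (hF : ∀ z, F z = (μ (Set.Iic z)).toReal) (hFcont : Continuous F)
    {u : ℝ} (hu : u ∈ Set.Ioo (0:ℝ) 1) : ∃ x, F x = u := by
  have hFc : F = ProbabilityTheory.cdf μ :=
    funext fun z => by rw [hF, ProbabilityTheory.cdf_eq_real, measureReal_def]
  have h1 : Tendsto F atTop (𝓝 1) := hFc ▸ ProbabilityTheory.tendsto_cdf_atTop μ
  have h0 : Tendsto F atBot (𝓝 0) := hFc ▸ ProbabilityTheory.tendsto_cdf_atBot μ
  obtain ⟨a, ha⟩ := (h0.eventually_lt_const hu.1).exists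
  obtain ⟨b, hb⟩ := (h1.eventually_const_lt hu.2).exists
  exact intermediate_value_univ a b hFcont ⟨ha.le, hb.le⟩

open Set Filter Topology in
lemma quantileFun_map_comp {μ : Measure ℝ} [IsProbabilityMeasure μ] {F V : ℝ → ℝ}
    (hF : ∀ z, F z = (μ (Set.Iic z)).toReal) (hFmono : StrictMono F)
    (hVmono : Monotone V) (hVcont : Continuous V)
    {x u : ℝ} (hx : F x = u) (hu : 0 < u) :
    quantileFun (Measure.map V μ) u = V x := by
  have hVmeas := hVcont.measurable
  have key : ∀ t, u ≤ ((Measure.map V μ) (Set.Iic t)).toReal ↔ V x ≤ t := by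
    intro t
    rw [Measure.map_apply hVmeas measurableSet_Iic]
    constructor
    · intro h
      by_contra hlt
      push_neg at hlt
      set S := V ⁻¹' Set.Iic t with hS
      have hSsub : S ⊆ Set.Iio x := by
        intro z hz
        by_contra hz'
        simp only [Set.mem_Iio, not_lt] at hz'
        exact absurd (le_trans (hVmono hz') hz) (not_le.mpr hlt)
      rcases S.eq_empty_or_nonempty with hE | hNE
      · rw [hE, measure_empty] at h
        simp at h
        exact absurd h (not_le.mpr hu)
      · have hclosed : IsClosed S := IsClosed.preimage hVcont isClosed_Iic
        have hbdd : BddAbove S := ⟨x, fun z hz => (hSsub hz).le⟩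
        have hmem : sSup S ∈ S := hclosed.csSup_mem hNE hbdd
        have hSeq : S ⊆ Set.Iic (sSup S) := fun z hz => le_csSup hbdd hz
        have hle : (μ S).toReal ≤ F (sSup S) := by
          rw [hF]
          exact ENNReal.toReal_mono (measure_ne_top _ _) (measure_mono hSeq)
        have hlt2 : (μ S).toReal < u := lt_of_le_of_lt hle (hx ▸ hFmono (hSsub hmem))
        exact absurd h (not_le.mpr hlt2)
    · intro h
      have hsub : Set.Iic x ⊆ V ⁻¹' Set.Iic t := fun z hz => le_trans (hVmono hz) h
      calc u = (μ (Set.Iic x)).toReal := by rw [← hx, hF]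
        _ ≤ _ := ENNReal.toReal_mono (measure_ne_top _ _) (measure_mono hsub)
  have hset : {t : ℝ | u ≤ ((Measure.map V μ) (Set.Iic t)).toReal} = Set.Ici (V x) := by
    ext t; exact key t
  rw [quantileFun, hset, csInf_Ici]

open Set Filter Topology in
lemma map_F_eq {μ : Measure ℝ} [IsProbabilityMeasure μ] {F : ℝ → ℝ}
    (hF : ∀ z, F z = (μ (Set.Iic z)).toReal) (hFcont : Continuous F) (hFmono : StrictMono F) :
    Measure.map F μ = volume.restrict (Set.Ioo (0:ℝ) 1) := by
  have hFmeas := hFcont.measurable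
  haveI : IsProbabilityMeasure (Measure.map F μ) :=
    Measure.isProbabilityMeasure_map hFmeas.aemeasurable
  have hFpos : ∀ z, 0 < F z := by
    intro z
    have h0 : (0:ℝ) ≤ F (z - 1) := by rw [hF]; exact ENNReal.toReal_nonneg
    exact lt_of_le_of_lt h0 (hFmono (by linarith))
  have hFle : ∀ z, F z ≤ 1 := by
    intro z
    rw [hF]
    simpa using ENNReal.toReal_mono ENNReal.one_ne_top (prob_le_one (μ := μ) (s := Set.Iic z))
  refine Measure.ext_of_Iic _ _ (fun a => ?_)
  rw [Measure.map_apply hFmeas measurableSet_Iic,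
    Measure.restrict_apply measurableSet_Iic]
  rcases le_or_gt a 0 with ha0 | ha0
  · have h1 : F ⁻¹' Set.Iic a = ∅ := by
      ext z; simp only [Set.mem_preimage, Set.mem_Iic, Set.mem_empty_iff_false, iff_false,
        not_le]
      exact lt_of_le_of_lt ha0 (hFpos z)
    have h2 : Set.Iic a ∩ Set.Ioo (0:ℝ) 1 = ∅ := by
      ext x; simp only [Set.mem_inter_iff, Set.mem_Iic, Set.mem_Ioo, Set.mem_empty_iff_false,
        iff_false, not_and, and_imp]
      intro hx h0 _
      exact absurd (lt_of_le_of_lt (le_trans hx ha0) h0) (lt_irrefl _)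
    rw [h1, h2, measure_empty, measure_empty]
  · rcases le_or_gt 1 a with ha1 | ha1
    · have h1 : F ⁻¹' Set.Iic a = Set.univ := by
        ext z; simp only [Set.mem_preimage, Set.mem_Iic, Set.mem_univ, iff_true]
        exact le_trans (hFle z) ha1
      have h2 : Set.Iic a ∩ Set.Ioo (0:ℝ) 1 = Set.Ioo 0 1 := by
        ext x; simp only [Set.mem_inter_iff, Set.mem_Iic, Set.mem_Ioo]
        exact ⟨fun h => h.2, fun h => ⟨le_trans h.2.le ha1, h⟩⟩
      rw [h1, h2, measure_univ, Real.volume_Ioo]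
      norm_num
    · obtain ⟨x, hx⟩ := exists_F_eq hF hFcont ⟨ha0, ha1⟩
      have h1 : F ⁻¹' Set.Iic a = Set.Iic x := by
        ext z; simp only [Set.mem_preimage, Set.mem_Iic, ← hx, hFmono.le_iff_le]
      have h2 : Set.Iic a ∩ Set.Ioo (0:ℝ) 1 = Set.Ioc 0 a := by
        ext y; simp only [Set.mem_inter_iff, Set.mem_Iic, Set.mem_Ioo, Set.mem_Ioc]
        exact ⟨fun h => ⟨h.2.1, h.1⟩, fun h => ⟨h.2, h.1, lt_of_le_of_lt h.2 ha1⟩⟩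
      have hval : (μ (Set.Iic x)).toReal = a := by rw [← hF, hx]
      rw [h1, h2, Real.volume_Ioc, sub_zero, ← hval,
        ENNReal.ofReal_toReal (measure_ne_top _ _)]

/-- For a real risk factor `Z` with continuous strictly increasing cdf `F_Z`
and density `f_Z`, and nonnegative increasing continuous `V, U`, assuming all integrals involved
are finite,
`ρ_m(V(Z)) - ρ_m(U(Z)) = ∫ (V(z) - U(z)) f_Z(z) f_m(F_Z(z)) dz`. -/
theorem rhoM_sub_eq_weighted_integral
    {Ω : Type*} [MeasurableSpace Ω] (P : Measure Ω) [IsProbabilityMeasure P]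
    (Z : Ω → ℝ) (hZ : Measurable Z)
    (F : ℝ → ℝ) (hF : ∀ z, F z = ((Measure.map Z P) (Set.Iic z)).toReal)
    (hFcont : Continuous F) (hFmono : StrictMono F)
    (fZ : ℝ → ℝ) (hfZmeas : Measurable fZ) (hfZ0 : ∀ z, 0 ≤ fZ z)
    (hdens : Measure.map Z P = volume.withDensity (fun z => ENNReal.ofReal (fZ z)))
    (V U : ℝ → ℝ)
    (hVmono : Monotone V) (hVcont : Continuous V) (hV0 : ∀ z, 0 ≤ V z)
    (hUmono : Monotone U) (hUcont : Continuous U) (hU0 : ∀ z, 0 ≤ U z)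
    (fm : ℝ → ℝ) (hfmmeas : Measurable fm) (hfm0 : ∀ u, 0 ≤ fm u)
    (hfm1 : ∫ u in Set.Ioo (0 : ℝ) 1, fm u = 1)
    (hXint : Integrable (fun u => quantileFun (Measure.map (fun ω => V (Z ω)) P) u * fm u)
      (volume.restrict (Set.Ioo (0 : ℝ) 1)))
    (hYint : Integrable (fun u => quantileFun (Measure.map (fun ω => U (Z ω)) P) u * fm u)
      (volume.restrict (Set.Ioo (0 : ℝ) 1)))
    (hint : Integrable (fun z => (V z - U z) * fZ z * fm (F z)) volume) :
    rhoM P fm (fun ω => V (Z ω)) - rhoM P fm (fun ω => U (Z ω))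
      = ∫ z, (V z - U z) * fZ z * fm (F z) := by
  set μ := Measure.map Z P with hμ
  haveI : IsProbabilityMeasure μ := Measure.isProbabilityMeasure_map hZ.aemeasurable
  have hVZ : Measure.map (fun ω => V (Z ω)) P = Measure.map V μ :=
    (Measure.map_map hVcont.measurable hZ).symm
  have hUZ : Measure.map (fun ω => U (Z ω)) P = Measure.map U μ :=
    (Measure.map_map hUcont.measurable hZ).symm
  set Q := quantileFun μ with hQ
  have hQF : ∀ z, Q (F z) = z := fun z => quantileFun_eq hF hFmono rfl
  have hVq : ∀ u ∈ Set.Ioo (0:ℝ) 1,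
      quantileFun (Measure.map (fun ω => V (Z ω)) P) u = V (Q u) := by
    intro u hu
    obtain ⟨x, hx⟩ := exists_F_eq hF hFcont hu
    rw [hVZ, quantileFun_map_comp hF hFmono hVmono hVcont hx hu.1, hQ,
      quantileFun_eq hF hFmono hx]
  have hUq : ∀ u ∈ Set.Ioo (0:ℝ) 1,
      quantileFun (Measure.map (fun ω => U (Z ω)) P) u = U (Q u) := by
    intro u hu
    obtain ⟨x, hx⟩ := exists_F_eq hF hFcont hu
    rw [hUZ, quantileFun_map_comp hF hFmono hUmono hUcont hx hu.1, hQ,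
      quantileFun_eq hF hFmono hx]
  have hXint' : Integrable (fun u => V (Q u) * fm u)
      (volume.restrict (Set.Ioo (0:ℝ) 1)) := by
    refine hXint.congr ?_
    exact (ae_restrict_iff' measurableSet_Ioo).2
      (Filter.Eventually.of_forall (fun u hu => by simp only [hVq u hu]))
  have hYint' : Integrable (fun u => U (Q u) * fm u)
      (volume.restrict (Set.Ioo (0:ℝ) 1)) := by
    refine hYint.congr ?_
    exact (ae_restrict_iff' measurableSet_Ioo).2
      (Filter.Eventually.of_forall (fun u hu => by simp only [hUq u hu]))
  have e1 : rhoM P fm (fun ω => V (Z ω)) = ∫ u in Set.Ioo (0:ℝ) 1, V (Q u) * fm u :=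
    setIntegral_congr_fun measurableSet_Ioo (fun u hu => by rw [hVq u hu])
  have e2 : rhoM P fm (fun ω => U (Z ω)) = ∫ u in Set.Ioo (0:ℝ) 1, U (Q u) * fm u :=
    setIntegral_congr_fun measurableSet_Ioo (fun u hu => by rw [hUq u hu])
  rw [e1, e2, ← integral_sub hXint' hYint']
  have e3 : ∫ u in Set.Ioo (0:ℝ) 1, (V (Q u) * fm u - U (Q u) * fm u)
      = ∫ u in Set.Ioo (0:ℝ) 1, (V (Q u) - U (Q u)) * fm u := by
    apply integral_congr_ae
    exact Filter.Eventually.of_forall (fun u => by ring)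
  rw [e3]
  -- measurability of the integrand on (0,1)
  have hQmono : MonotoneOn Q (Set.Ioo (0:ℝ) 1) := by
    intro u hu u' hu' huu'
    obtain ⟨x, hx⟩ := exists_F_eq hF hFcont hu
    obtain ⟨x', hx'⟩ := exists_F_eq hF hFcont hu'
    rw [hQ, quantileFun_eq hF hFmono hx, quantileFun_eq hF hFmono hx']
    exact hFmono.le_iff_le.mp (by rw [hx, hx']; exact huu')
  have hQae : AEMeasurable Q (volume.restrict (Set.Ioo (0:ℝ) 1)) :=
    aemeasurable_restrict_of_monotoneOn measurableSet_Ioo hQmono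
  have hgmeas : AEStronglyMeasurable (fun u => (V (Q u) - U (Q u)) * fm u)
      (volume.restrict (Set.Ioo (0:ℝ) 1)) :=
    (((hVcont.measurable.comp_aemeasurable hQae).sub
      (hUcont.measurable.comp_aemeasurable hQae)).mul hfmmeas.aemeasurable).aestronglyMeasurable
  have hmap := map_F_eq hF hFcont hFmono
  have e4 : ∫ u in Set.Ioo (0:ℝ) 1, (V (Q u) - U (Q u)) * fm u
      = ∫ z, (V (Q (F z)) - U (Q (F z))) * fm (F z) ∂μ := by
    rw [← hmap] at hgmeas ⊢
    exact integral_map hFcont.measurable.aemeasurable hgmeas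
  rw [e4]
  have e5 : ∫ z, (V (Q (F z)) - U (Q (F z))) * fm (F z) ∂μ
      = ∫ z, (V z - U z) * fm (F z) ∂μ :=
    integral_congr_ae (Filter.Eventually.of_forall (fun z => by simp only [hQF z]))
  rw [e5, hdens]
  have hcoe : (fun z => ENNReal.ofReal (fZ z))
      = (fun z => ((fZ z).toNNReal : ENNReal)) := rfl
  have hmeasN : Measurable (fun z => (fZ z).toNNReal) := measurable_real_toNNReal.comp hfZmeas
  rw [hcoe, integral_withDensity_eq_integral_smul hmeasN]
  apply integral_congr_ae
  refine Filter.Eventually.of_forall (fun z => ?_)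
  simp only [NNReal.smul_def, Real.coe_toNNReal _ (hfZ0 z), smul_eq_mul]
  ring
end

section
/- Let Z¹, …, Zⁿ be i.i.d. real random variables with common bounded density f_Z, let V, U : ℝ → ℝ be measurable with ‖V − U‖_{L^p(ℝ)} < ∞ for some 1 ≤ p < ∞, and set X^i = max{V(Z^i), 0}, Y^i = max{U(Z^i), 0}. Let ρ̂ : ℝⁿ → ℝ be any functional that is 1-Lipschitz with respect to the ℓ^∞ norm (as is every empirical estimator of a law-invariant exposure measure). Then for every η ∈ (0,1], with probability at least 1 − η, |ρ̂(X¹, …, Xⁿ) − ρ̂(Y¹, …, Yⁿ)| ≤ (‖f_Z‖_∞ / η)^{1/p} · n^{1/p} · ‖V − U‖_{L^p(ℝ)}. -/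
open MeasureTheory ProbabilityTheory

/-- Finite-sample bound for a 1-Lipschitz (w.r.t. `ℓ^∞`) empirical exposure
estimator: for i.i.d. `Zⁱ` with common bounded density `f_Z` and samples `Xⁱ = (V(Zⁱ))⁺`,
`Yⁱ = (U(Zⁱ))⁺`, with probability at least `1 - η`,
`|ρ̂(X) - ρ̂(Y)| ≤ (‖f_Z‖_∞/η)^{1/p} n^{1/p} ‖V - U‖_{L^p(ℝ)}`. -/
theorem finite_sample_lp_bound
    {Ω : Type*} [MeasurableSpace Ω] (P : Measure Ω) [IsProbabilityMeasure P]
    {n : ℕ} (hn : 0 < n)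
    (Z : Fin n → Ω → ℝ) (hZmeas : ∀ i, Measurable (Z i))
    (hindep : iIndepFun Z P)
    (fZ : ℝ → ℝ) (hfZmeas : Measurable fZ) (hfZ0 : ∀ z, 0 ≤ fZ z)
    (hfZbdd : BddAbove (Set.range fZ))
    (hdens : ∀ i, Measure.map (Z i) P = volume.withDensity (fun z => ENNReal.ofReal (fZ z)))
    (V U : ℝ → ℝ) (hV : Measurable V) (hU : Measurable U)
    (p : ℝ) (hp : 1 ≤ p)
    (hVU : Integrable (fun z => |V z - U z| ^ p) volume)
    (ρhat : (Fin n → ℝ) → ℝ)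
    (hlip : ∀ (v w : Fin n → ℝ) (c : ℝ), (∀ i, |v i - w i| ≤ c) → |ρhat v - ρhat w| ≤ c)
    (η : ℝ) (hη : η ∈ Set.Ioc (0 : ℝ) 1) :
    1 - ENNReal.ofReal η ≤
      P {ω | |ρhat (fun i => max (V (Z i ω)) 0) - ρhat (fun i => max (U (Z i ω)) 0)|
        ≤ ((⨆ z, fZ z) / η) ^ (1 / p) * (n : ℝ) ^ (1 / p)
            * (∫ z, |V z - U z| ^ p) ^ (1 / p)} := by
  obtain ⟨hη0, hη1⟩ := hη
  have hp0 : 0 < p := lt_of_lt_of_le one_pos hp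
  have hn0 : (0:ℝ) < n := Nat.cast_pos.mpr hn
  set g : ℝ → ℝ := fun z => |V z - U z| with hgdef
  have hgmeas : Measurable g := (hV.sub hU).abs
  have hg0 : ∀ z, 0 ≤ g z := fun z => abs_nonneg _
  set M : ℝ := ⨆ z, fZ z with hMdef
  have hMle : ∀ z, fZ z ≤ M := fun z => le_ciSup hfZbdd z
  have hM0 : 0 ≤ M := le_trans (hfZ0 0) (hMle 0)
  have hMpos : 0 < M := by
    rcases lt_or_eq_of_le hM0 with h | h
    · exact h
    · exfalso
      have hfz : ∀ z, fZ z = 0 := fun z => le_antisymm (h ▸ hMle z) (hfZ0 z)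
      have hmap : IsProbabilityMeasure (Measure.map (Z ⟨0, hn⟩) P) :=
        Measure.isProbabilityMeasure_map (hZmeas _).aemeasurable
      have h1 : Measure.map (Z ⟨0, hn⟩) P Set.univ = 1 := hmap.measure_univ
      rw [hdens] at h1
      simp [hfz] at h1
  set I : ℝ := ∫ z, g z ^ p with hIdef
  have hI0 : 0 ≤ I := integral_nonneg (fun z => Real.rpow_nonneg (hg0 z) p)
  set c : ℝ := (M / η) ^ (1/p) * (n:ℝ) ^ (1/p) * I ^ (1/p) with hcdef
  have hc0 : 0 ≤ c := by positivity
  have hSmeas : MeasurableSet {z : ℝ | c < g z} := measurableSet_lt measurable_const hgmeas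
  -- pointwise tail bound
  have key : ∀ i, P {ω | c < g (Z i ω)} ≤ ENNReal.ofReal (η / n) := by
    intro i
    have h1 : P {ω | c < g (Z i ω)} = Measure.map (Z i) P {z | c < g z} := by
      rw [Measure.map_apply (hZmeas i) hSmeas]; rfl
    rw [h1, hdens i, withDensity_apply _ hSmeas]
    have h2 : ∫⁻ z in {z | c < g z}, ENNReal.ofReal (fZ z)
        ≤ ENNReal.ofReal M * volume {z | c < g z} := by
      calc ∫⁻ z in {z | c < g z}, ENNReal.ofReal (fZ z)
          ≤ ∫⁻ _ in {z | c < g z}, ENNReal.ofReal M :=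
            lintegral_mono fun z => ENNReal.ofReal_le_ofReal (hMle z)
        _ = ENNReal.ofReal M * volume {z | c < g z} := by
            rw [setLIntegral_const]
    refine h2.trans ?_
    rcases eq_or_lt_of_le hI0 with hIz | hIpos
    · -- I = 0 : the set is null
      have hae : (fun z => g z ^ p) =ᵐ[volume] 0 := by
        rw [← integral_eq_zero_iff_of_nonneg (fun z => Real.rpow_nonneg (hg0 z) p) hVU]
        exact hIz.symm
      have hcz : c = 0 := by
        rw [hcdef, ← hIz, Real.zero_rpow (by positivity : 1/p ≠ 0), mul_zero]
      have hnull0 : volume {z | g z ^ p ≠ 0} = 0 := by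
        refine measure_eq_zero_iff_ae_notMem.mpr ?_
        filter_upwards [hae] with z hz
        simp only [Pi.zero_apply] at hz
        simp [Set.mem_setOf_eq, hz]
      have hnull : volume {z | c < g z} = 0 := by
        refine measure_mono_null (fun z hz => ?_) hnull0
        have : 0 < g z := hcz ▸ hz
        exact (Real.rpow_pos_of_pos this p).ne'
      rw [hnull, mul_zero]
      exact zero_le
    · -- I > 0 : Markov
      have hcpos : 0 < c := by
        rw [hcdef]; positivity
      have haux : ∀ x : ℝ, 0 ≤ x → (x ^ (1/p)) ^ p = x := by
        intro x hx
        rw [← Real.rpow_mul hx, one_div_mul_cancel hp0.ne', Real.rpow_one]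
      have hcp : c ^ p = (M / η) * n * I := by
        rw [hcdef, Real.mul_rpow (by positivity) (by positivity),
          Real.mul_rpow (by positivity) (by positivity),
          haux _ (by positivity), haux _ (by positivity), haux _ hI0]
      have hcpp : (0:ℝ) < c ^ p := Real.rpow_pos_of_pos hcpos p
      -- Markov inequality
      have hmarkov : ENNReal.ofReal (c ^ p) * volume {z | c < g z} ≤ ENNReal.ofReal I := by
        have hsub : {z | c < g z} ⊆ {z | ENNReal.ofReal (c ^ p) ≤ ENNReal.ofReal (g z ^ p)} := by
          intro z hz
          exact ENNReal.ofReal_le_ofReal (Real.rpow_le_rpow hc0 (le_of_lt hz) hp0.le)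
        have hcheb := mul_meas_ge_le_lintegral₀
          (μ := volume) (f := fun z => ENNReal.ofReal (g z ^ p))
          ((ENNReal.measurable_ofReal.comp (hgmeas.pow measurable_const)).aemeasurable)
          (ENNReal.ofReal (c ^ p))
        have hlil : ∫⁻ z, ENNReal.ofReal (g z ^ p) = ENNReal.ofReal I := by
          rw [hIdef, ofReal_integral_eq_lintegral_ofReal hVU
            (Filter.Eventually.of_forall fun z => Real.rpow_nonneg (hg0 z) p)]
        calc ENNReal.ofReal (c ^ p) * volume {z | c < g z}
            ≤ ENNReal.ofReal (c ^ p) * volume {z | ENNReal.ofReal (c ^ p) ≤ ENNReal.ofReal (g z ^ p)} := by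
              exact mul_le_mul_right (measure_mono hsub) _
          _ ≤ ∫⁻ z, ENNReal.ofReal (g z ^ p) := hcheb
          _ = ENNReal.ofReal I := hlil
      -- combine
      have heq : M * I = (η / n) * c ^ p := by
        rw [hcp]; field_simp
      have hfinal : ENNReal.ofReal M * volume {z | c < g z} * ENNReal.ofReal (c ^ p)
          ≤ ENNReal.ofReal (η / n) * ENNReal.ofReal (c ^ p) := by
        calc ENNReal.ofReal M * volume {z | c < g z} * ENNReal.ofReal (c ^ p)
            = ENNReal.ofReal M * (ENNReal.ofReal (c ^ p) * volume {z | c < g z}) := by ring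
          _ ≤ ENNReal.ofReal M * ENNReal.ofReal I := mul_le_mul_right hmarkov _
          _ = ENNReal.ofReal (M * I) := (ENNReal.ofReal_mul hM0).symm
          _ = ENNReal.ofReal (η / n) * ENNReal.ofReal (c ^ p) := by
              rw [heq, ENNReal.ofReal_mul (by positivity)]
      exact (ENNReal.mul_le_mul_iff_left ((ENNReal.ofReal_pos.mpr hcpp).ne') ENNReal.ofReal_ne_top).mp hfinal
  -- union bound
  set B : Fin n → Set Ω := fun i => {ω | c < g (Z i ω)} with hBdef
  have hBmeas : ∀ i, MeasurableSet (B i) := fun i => (hZmeas i) hSmeas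
  have hunion : P (⋃ i, B i) ≤ ENNReal.ofReal η := by
    calc P (⋃ i, B i) ≤ ∑ i, P (B i) := measure_iUnion_fintype_le _ _
      _ ≤ ∑ _i : Fin n, ENNReal.ofReal (η / n) := Finset.sum_le_sum fun i _ => key i
      _ = (n : ℕ) * ENNReal.ofReal (η / n) := by
          rw [Finset.sum_const, Finset.card_univ, Fintype.card_fin, nsmul_eq_mul]
      _ = ENNReal.ofReal η := by
          rw [← ENNReal.ofReal_natCast, ← ENNReal.ofReal_mul (by positivity),
            mul_div_cancel₀ _ hn0.ne']
  have hsub : (⋃ i, B i)ᶜ ⊆ {ω | |ρhat (fun i => max (V (Z i ω)) 0)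
      - ρhat (fun i => max (U (Z i ω)) 0)| ≤ c} := by
    intro ω hω
    simp only [Set.mem_compl_iff, Set.mem_iUnion, not_exists, hBdef, Set.mem_setOf_eq,
      not_lt] at hω
    refine hlip _ _ c fun i => ?_
    calc |max (V (Z i ω)) 0 - max (U (Z i ω)) 0| ≤ |V (Z i ω) - U (Z i ω)| :=
          abs_max_sub_max_le_abs _ _ _
      _ ≤ c := hω i
  calc 1 - ENNReal.ofReal η ≤ 1 - P (⋃ i, B i) := tsub_le_tsub_left hunion 1
    _ = P ((⋃ i, B i)ᶜ) := by
        rw [prob_compl_eq_one_sub (MeasurableSet.iUnion hBmeas)]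
    _ ≤ _ := measure_mono hsub
end

section
/- Let a, b ∈ ℝⁿ, let a^{(i)}, b^{(i)} denote their i-th smallest entries, and let w₁, …, w_n ≥ 0. Then for conjugate exponents 1 ≤ p, q ≤ ∞ with 1/p + 1/q = 1, |Σ_{i=1}^n w_i (a^{(i)} − b^{(i)})| ≤ (Σ_{i=1}^n w_i^q)^{1/q} · (Σ_{i=1}^n |a^i − b^i|^p)^{1/p} (with the usual sup-norm interpretation when an exponent equals ∞). -/
open scoped ENNReal

/-- The `ℓ^p` norm of a tuple, `p ∈ [1,∞]`, with the sup-norm interpretation for `p = ∞`. -/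
noncomputable def lpTupleNorm {n : ℕ} (p : ℝ≥0∞) (v : Fin n → ℝ) : ℝ :=
  if p = ∞ then ⨆ i, |v i| else (∑ i : Fin n, |v i| ^ p.toReal) ^ (1 / p.toReal)

/- ## Auxiliary lemmas -/

lemma convexOn_abs' : ConvexOn ℝ Set.univ (fun x : ℝ => |x|) :=
  ⟨convex_univ, fun x _ y _ a b ha hb _ => by
    simp only [smul_eq_mul]
    calc |a * x + b * y| ≤ |a * x| + |b * y| := abs_add_le _ _
    _ = a * |x| + b * |y| := by rw [abs_mul, abs_mul, abs_of_nonneg ha, abs_of_nonneg hb]⟩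

lemma convexOn_abs_rpow' {p : ℝ} (hp : 1 ≤ p) :
    ConvexOn ℝ Set.univ (fun x : ℝ => |x| ^ p) := by
  have himg : (fun x : ℝ => |x|) '' Set.univ = Set.Ici 0 := by
    ext y
    simp only [Set.image_univ, Set.mem_range, Set.mem_Ici]
    constructor
    · rintro ⟨x, rfl⟩; exact abs_nonneg x
    · intro hy; exact ⟨y, abs_of_nonneg hy⟩
  have hg : ConvexOn ℝ ((fun x : ℝ => |x|) '' Set.univ) (fun y : ℝ => y ^ p) := by
    rw [himg]; exact convexOn_rpow hp
  have hmono : MonotoneOn (fun y : ℝ => y ^ p) ((fun x : ℝ => |x|) '' Set.univ) := by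
    rw [himg]
    intro x hx y _ hxy
    exact Real.rpow_le_rpow hx hxy (le_trans zero_le_one hp)
  exact hg.comp convexOn_abs' hmono

lemma convexOn_absM (M : ℝ) : ConvexOn ℝ Set.univ (fun x : ℝ => max (|x| - M) 0) := by
  have h1 : ConvexOn ℝ Set.univ ((fun x : ℝ => |x|) - (fun _ : ℝ => M)) :=
    convexOn_abs'.sub (concaveOn_const M convex_univ)
  have h2 : ConvexOn ℝ Set.univ (fun _ : ℝ => (0 : ℝ)) := convexOn_const 0 convex_univ
  exact h1.sup h2

lemma convexOn_two_point {φ : ℝ → ℝ} (hφ : ConvexOn ℝ Set.univ φ)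
    {u c v : ℝ} (huc : u ≤ c) (hcv : c ≤ v) :
    φ c + φ (u + v - c) ≤ φ u + φ v := by
  rcases eq_or_lt_of_le (huc.trans hcv) with h | h
  · have h1 : c = u := le_antisymm (h ▸ hcv) huc
    have h2 : u + v - c = v := by rw [h1]; ring
    rw [h2, h1]
  · set t := (v - c) / (v - u) with ht
    have hvu : 0 < v - u := by linarith
    have ht0 : 0 ≤ t := div_nonneg (by linarith) hvu.le
    have ht1 : t ≤ 1 := (div_le_one hvu).2 (by linarith)
    have htv : t * (v - u) = v - c := div_mul_cancel₀ (v - c) hvu.ne'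
    have hc : t * u + (1 - t) * v = c := by linear_combination -htv
    have hd : (1 - t) * u + t * v = u + v - c := by linear_combination htv
    have H1 := hφ.2 (Set.mem_univ u) (Set.mem_univ v) ht0 (by linarith) (by ring : t + (1 - t) = 1)
    have H2 := hφ.2 (Set.mem_univ u) (Set.mem_univ v) (by linarith : (0:ℝ) ≤ 1 - t) ht0 (by ring)
    simp only [smul_eq_mul] at H1 H2
    rw [hc] at H1
    rw [hd] at H2
    linarith

lemma two_point_of_convex {φ : ℝ → ℝ} (hφ : ConvexOn ℝ Set.univ φ) :
    ∀ a1 a2 b1 b2 : ℝ, a1 ≤ a2 → b1 ≤ b2 →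
      φ (a1 - b1) + φ (a2 - b2) ≤ φ (a1 - b2) + φ (a2 - b1) := by
  intro a1 a2 b1 b2 ha hb
  have h := convexOn_two_point hφ (u := a1 - b2) (c := a1 - b1) (v := a2 - b1)
    (by linarith) (by linarith)
  have he : a1 - b2 + (a2 - b1) - (a1 - b1) = a2 - b2 := by ring
  rw [he] at h
  linarith

lemma sum_phi_finset {n : ℕ} (φ : ℝ → ℝ)
    (hφ : ∀ a1 a2 b1 b2 : ℝ, a1 ≤ a2 → b1 ≤ b2 →
      φ (a1 - b1) + φ (a2 - b2) ≤ φ (a1 - b2) + φ (a2 - b1))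
    (A B : Fin n → ℝ) (hA : Monotone A) (hB : Monotone B) :
    ∀ s : Finset (Fin n), ∀ σ : Equiv.Perm (Fin n), (∀ x, σ x ≠ x → x ∈ s) →
      ∑ i ∈ s, φ (A i - B i) ≤ ∑ i ∈ s, φ (A i - B (σ i)) := by
  intro s
  induction s using Finset.strongInduction with
  | _ s ih =>
    intro σ hσ
    rcases s.eq_empty_or_nonempty with rfl | hne
    · simp
    · set j := s.max' hne with hj
      have hjs : j ∈ s := s.max'_mem hne
      by_cases hfix : σ j = j
      · have hσ' : ∀ x, σ x ≠ x → x ∈ s.erase j := by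
          intro x hx
          refine Finset.mem_erase.2 ⟨?_, hσ x hx⟩
          rintro rfl; exact hx hfix
        have h := ih _ (Finset.erase_ssubset hjs) σ hσ'
        rw [← Finset.add_sum_erase s _ hjs,
            ← Finset.add_sum_erase s (fun i => φ (A i - B (σ i))) hjs, hfix]
        exact add_le_add_right h _
      · set k := σ.symm j with hk
        have hσk : σ k = j := σ.apply_symm_apply j
        have hkj : k ≠ j := by
          intro h; apply hfix; rw [← h] at hσk ⊢; exact hσk
        have hks : k ∈ s := hσ k (by rw [hσk]; exact hkj.symm)
        have hσjs : σ j ∈ s := by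
          apply hσ
          intro h
          exact hfix (σ.injective h)
        have hkle : k ≤ j := s.le_max' k hks
        have hσjle : σ j ≤ j := s.le_max' _ hσjs
        set σ' := σ * Equiv.swap k j with hσ'def
        have hσ'j : σ' j = j := by
          simp only [hσ'def, Equiv.Perm.mul_apply, Equiv.swap_apply_right, hσk]
        have hσ'k : σ' k = σ j := by
          simp only [hσ'def, Equiv.Perm.mul_apply, Equiv.swap_apply_left]
        have hσ'x : ∀ x, x ≠ k → x ≠ j → σ' x = σ x := by
          intro x h1 h2
          simp only [hσ'def, Equiv.Perm.mul_apply, Equiv.swap_apply_of_ne_of_ne h1 h2]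
        have hsupp' : ∀ x, σ' x ≠ x → x ∈ s.erase j := by
          intro x hx
          have h2 : x ≠ j := by rintro rfl; exact hx hσ'j
          refine Finset.mem_erase.2 ⟨h2, ?_⟩
          by_cases h1 : x = k
          · subst h1; exact hks
          · exact hσ x (by rwa [hσ'x x h1 h2] at hx)
        have h1 := ih _ (Finset.erase_ssubset hjs) σ' hsupp'
        have h2 : ∑ i ∈ s, φ (A i - B i) ≤ ∑ i ∈ s, φ (A i - B (σ' i)) := by
          rw [← Finset.add_sum_erase s _ hjs,
              ← Finset.add_sum_erase s (fun i => φ (A i - B (σ' i))) hjs, hσ'j]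
          exact add_le_add_right h1 _
        refine h2.trans ?_
        have hjs' : j ∈ s.erase k := Finset.mem_erase.2 ⟨hkj.symm, hjs⟩
        rw [← Finset.add_sum_erase s _ hks,
            ← Finset.add_sum_erase s (fun i => φ (A i - B (σ i))) hks,
            ← Finset.add_sum_erase _ (fun i => φ (A i - B (σ' i))) hjs',
            ← Finset.add_sum_erase _ (fun i => φ (A i - B (σ i))) hjs']
        have heq : ∑ i ∈ (s.erase k).erase j, φ (A i - B (σ' i))
            = ∑ i ∈ (s.erase k).erase j, φ (A i - B (σ i)) := by
          apply Finset.sum_congr rfl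
          intro x hx
          have h3 := Finset.mem_erase.1 hx
          have h4 := Finset.mem_erase.1 h3.2
          rw [hσ'x x h4.1 h3.1]
        rw [heq, hσ'k, hσ'j, hσk]
        rw [← add_assoc, ← add_assoc]
        apply add_le_add_left
        have := hφ (A k) (A j) (B (σ j)) (B j) (hA hkle) (hB hσjle)
        linarith

lemma sum_phi_sorted_le {n : ℕ} (φ : ℝ → ℝ) (hconv : ConvexOn ℝ Set.univ φ)
    (a b : Fin n → ℝ) :
    ∑ i : Fin n, φ (sortedTuple a i - sortedTuple b i) ≤ ∑ i : Fin n, φ (a i - b i) := by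
  have hφ := two_point_of_convex hconv
  have hA : Monotone (a ∘ Tuple.sort a) := Tuple.monotone_sort a
  have hB : Monotone (b ∘ Tuple.sort b) := Tuple.monotone_sort b
  have key := sum_phi_finset φ hφ (a ∘ Tuple.sort a) (b ∘ Tuple.sort b) hA hB
    Finset.univ ((Tuple.sort a).trans (Tuple.sort b).symm) (fun x _ => Finset.mem_univ x)
  have h2 : ∑ i : Fin n, φ ((a ∘ Tuple.sort a) i
      - (b ∘ Tuple.sort b) (((Tuple.sort a).trans (Tuple.sort b).symm) i))
      = ∑ i : Fin n, φ (a i - b i) := by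
    simp only [Function.comp_apply, Equiv.trans_apply, Equiv.apply_symm_apply]
    exact Equiv.sum_comp (Tuple.sort a) (fun i => φ (a i - b i))
  rw [h2] at key
  exact key

lemma sorted_diff_le_sup {n : ℕ} (a b : Fin n → ℝ) (i : Fin n) :
    |sortedTuple a i - sortedTuple b i| ≤ ⨆ j, |a j - b j| := by
  have hne : Nonempty (Fin n) := ⟨i⟩
  set M := ⨆ j, |a j - b j| with hM
  have hbdd : BddAbove (Set.range fun j => |a j - b j|) :=
    Set.Finite.bddAbove (Set.finite_range _)
  have hle : ∀ j, |a j - b j| ≤ M := fun j => le_ciSup hbdd j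
  have hsum := sum_phi_sorted_le (fun x => max (|x| - M) 0) (convexOn_absM M) a b
  have hrhs : ∑ j : Fin n, max (|a j - b j| - M) 0 = 0 :=
    Finset.sum_eq_zero fun j _ => max_eq_right (by linarith [hle j])
  rw [hrhs] at hsum
  have hterm : ∀ j ∈ Finset.univ, (0:ℝ) ≤ max (|sortedTuple a j - sortedTuple b j| - M) 0 :=
    fun j _ => le_max_right _ _
  have hz := (Finset.sum_eq_zero_iff_of_nonneg hterm).1
    (le_antisymm hsum (Finset.sum_nonneg hterm)) i (Finset.mem_univ i)
  by_contra h
  push_neg at h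
  rw [max_eq_left (by linarith)] at hz
  linarith

/-- Hölder inequality for weighted differences of sorted tuples:
for nonnegative weights `w` and conjugate exponents `1 ≤ p, q ≤ ∞`,
`|∑ᵢ wᵢ (a^{(i)} - b^{(i)})| ≤ ‖w‖_{ℓ^q} ‖a - b‖_{ℓ^p}`. -/
theorem weighted_sorted_diff_holder {n : ℕ} (a b : Fin n → ℝ)
    (w : Fin n → ℝ) (hw : ∀ i, 0 ≤ w i)
    (p q : ℝ≥0∞) (hp : 1 ≤ p) (hpq : 1 / p + 1 / q = 1) :
    |∑ i : Fin n, w i * (sortedTuple a i - sortedTuple b i)|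
      ≤ lpTupleNorm q w * lpTupleNorm p (fun i => a i - b i) := by
  set d := fun i => sortedTuple a i - sortedTuple b i with hd
  have habs : |∑ i : Fin n, w i * d i| ≤ ∑ i : Fin n, w i * |d i| := by
    refine (Finset.abs_sum_le_sum_abs _ _).trans_eq ?_
    exact Finset.sum_congr rfl fun i _ => by rw [abs_mul, abs_of_nonneg (hw i)]
  by_cases hp_top : p = ∞
  · -- q = 1
    have hq1 : q = 1 := by
      rw [hp_top] at hpq
      simp only [one_div, ENNReal.inv_top, zero_add] at hpq
      rw [← inv_inv q, hpq, inv_one]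
    subst hq1
    have hM : ∀ i, |d i| ≤ ⨆ j, |a j - b j| := fun i => sorted_diff_le_sup a b i
    have h1 : ∑ i : Fin n, w i * |d i| ≤ ∑ i : Fin n, w i * (⨆ j, |a j - b j|) :=
      Finset.sum_le_sum fun i _ => mul_le_mul_of_nonneg_left (hM i) (hw i)
    have h2 : lpTupleNorm 1 w = ∑ i : Fin n, w i := by
      simp only [lpTupleNorm, if_neg (by simp : (1:ℝ≥0∞) ≠ ∞), ENNReal.toReal_one,
        Real.rpow_one, one_div, inv_one]
      exact Finset.sum_congr rfl fun i _ => abs_of_nonneg (hw i)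
    have h3 : lpTupleNorm ⊤ (fun i => a i - b i) = ⨆ j, |a j - b j| := by
      simp [lpTupleNorm]
    rw [hp_top, h2, h3, Finset.sum_mul]
    exact habs.trans h1
  by_cases hq_top : q = ∞
  · -- p = 1
    have hp1 : p = 1 := by
      rw [hq_top] at hpq
      simp only [one_div, ENNReal.inv_top, add_zero] at hpq
      rw [← inv_inv p, hpq, inv_one]
    subst hp1
    set Mw := ⨆ j, |w j| with hMw
    have hbdd : BddAbove (Set.range fun j => |w j|) :=
      Set.Finite.bddAbove (Set.finite_range _)
    have hMw0 : 0 ≤ Mw := Real.iSup_nonneg fun j => abs_nonneg _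
    have h1 : ∑ i : Fin n, w i * |d i| ≤ ∑ i : Fin n, Mw * |d i| := by
      refine Finset.sum_le_sum fun i _ => mul_le_mul_of_nonneg_right ?_ (abs_nonneg _)
      exact (le_abs_self _).trans (le_ciSup hbdd i)
    have h2 : ∑ i : Fin n, |d i| ≤ ∑ i : Fin n, |a i - b i| :=
      sum_phi_sorted_le (fun x => |x|) convexOn_abs' a b
    have h3 : lpTupleNorm ⊤ w = Mw := by simp [lpTupleNorm, hMw]
    have h4 : lpTupleNorm 1 (fun i => a i - b i) = ∑ i : Fin n, |a i - b i| := by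
      simp [lpTupleNorm, Real.rpow_one]
    rw [hq_top, h3, h4]
    calc |∑ i : Fin n, w i * d i| ≤ ∑ i : Fin n, w i * |d i| := habs
      _ ≤ ∑ i : Fin n, Mw * |d i| := h1
      _ = Mw * ∑ i : Fin n, |d i| := by rw [Finset.mul_sum]
      _ ≤ Mw * ∑ i : Fin n, |a i - b i| := mul_le_mul_of_nonneg_left h2 hMw0
  · -- 1 < p < ∞, 1 < q < ∞
    set pr := p.toReal with hpr
    set qr := q.toReal with hqr
    have hp0 : p ≠ 0 := (lt_of_lt_of_le zero_lt_one hp).ne'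
    have hq0 : q ≠ 0 := by
      rintro rfl
      simp at hpq
    have hp1 : p ≠ 1 := by
      rintro rfl
      simp only [one_div, inv_one] at hpq
      have h0 : q⁻¹ = 0 :=
        (ENNReal.add_right_inj (by simp)).mp (hpq.trans (add_zero (1:ℝ≥0∞)).symm)
      exact hq_top (ENNReal.inv_eq_zero.mp h0)
    have hpr1 : 1 < pr := by
      rw [hpr]
      have := ENNReal.toReal_lt_toReal (a := 1) (b := p) (by simp) hp_top
      exact this.mpr (lt_of_le_of_ne hp (Ne.symm hp1))
    have hconj : 1 / pr + 1 / qr = 1 := by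
      have h1p : (1 / p) ≠ ∞ := by simp [hp0]
      have h1q : (1 / q) ≠ ∞ := by simp [hq0]
      have := congrArg ENNReal.toReal hpq
      rw [ENNReal.toReal_add h1p h1q] at this
      simpa [ENNReal.toReal_div] using this
    have hinvq_pos : 0 < 1 / qr := by
      have hlt : 1 / pr < 1 := by rw [div_lt_one (by linarith)]; exact hpr1
      linarith
    have hqr0 : 0 < qr := by
      by_contra h
      push_neg at h
      have : 1 / qr ≤ 0 := div_nonpos_of_nonneg_of_nonpos zero_le_one h
      linarith
    have hqr1 : 1 < qr := by
      have h2 : 1 / qr < 1 := by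
        have : 0 < 1 / pr := by positivity
        linarith
      rwa [div_lt_one hqr0] at h2
    have hconjE : qr.HolderConjugate pr := ⟨by
      rw [inv_eq_one_div, inv_eq_one_div, inv_one]; linarith, hqr0, by linarith⟩
    have hHolder := Real.inner_le_Lp_mul_Lq (Finset.univ) w (fun i => |d i|) hconjE
    have h2 : ∑ i : Fin n, |(|d i|)| ^ pr ≤ ∑ i : Fin n, |a i - b i| ^ pr := by
      simp only [abs_abs]
      exact sum_phi_sorted_le (fun x => |x| ^ pr) (convexOn_abs_rpow' hpr1.le) a b
    have h3 : (∑ i : Fin n, |(|d i|)| ^ pr) ^ (1 / pr) ≤ (∑ i : Fin n, |a i - b i| ^ pr) ^ (1 / pr) := by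
      apply Real.rpow_le_rpow ?_ h2 (by positivity)
      exact Finset.sum_nonneg fun i _ => Real.rpow_nonneg (abs_nonneg _) _
    have hval : lpTupleNorm q w = (∑ i : Fin n, |w i| ^ qr) ^ (1 / qr) := by
      simp [lpTupleNorm, hq_top, hqr]
    have hval2 : lpTupleNorm p (fun i => a i - b i) = (∑ i : Fin n, |a i - b i| ^ pr) ^ (1 / pr) := by
      simp [lpTupleNorm, hp_top, hpr]
    rw [hval, hval2]
    calc |∑ i : Fin n, w i * d i| ≤ ∑ i : Fin n, w i * |d i| := habs
      _ ≤ (∑ i : Fin n, |w i| ^ qr) ^ (1 / qr) * (∑ i : Fin n, |(|d i|)| ^ pr) ^ (1 / pr) := hHolder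
      _ ≤ (∑ i : Fin n, |w i| ^ qr) ^ (1 / qr) * (∑ i : Fin n, |a i - b i| ^ pr) ^ (1 / pr) := by
          apply mul_le_mul_of_nonneg_left h3
          exact Real.rpow_nonneg (Finset.sum_nonneg fun i _ => Real.rpow_nonneg (abs_nonneg _) _) _
end

section
/- Let D ≥ 1 be an integer, α ∈ (1, 2], c₂ > 0, and λ ∈ (0, αc₂). Set γ₁ = (α − 1)/(α λ^{1/(α−1)}) and γ₂ = c₂ − λ/α > 0. Then for every y ∈ ℝ^D, ∫_{ℝ^D} exp(−c₂ ‖u‖₂^α + ⟨u, y⟩) du ≤ exp(γ₁ ‖y‖₂^{α/(α−1)}) · ∫_{ℝ^D} exp(−γ₂ ‖u‖₂^α) du, and the integral ∫_{ℝ^D} exp(−γ₂ ‖u‖₂^α) du is finite. -/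
open MeasureTheory Real
open scoped RealInnerProductSpace

private lemma young_aux {α l : ℝ} (hα : 1 < α) (hl : 0 < l) {t s : ℝ} (ht : 0 ≤ t) (hs : 0 ≤ s) :
    t * s ≤ l / α * t ^ α + (α - 1) / (α * l ^ ((1 : ℝ) / (α - 1))) * s ^ (α / (α - 1)) := by
  have hα0 : (0:ℝ) < α := by linarith
  have hα1 : (0:ℝ) < α - 1 := by linarith
  have hpq : α.HolderConjugate (α / (α - 1)) := Real.HolderConjugate.conjExponent hα
  have key := Real.young_inequality_of_nonneg
    (a := l ^ (α⁻¹) * t) (b := l ^ (-α⁻¹) * s)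
    (by positivity) (by positivity) hpq
  have hmul : l ^ (α⁻¹) * t * (l ^ (-α⁻¹) * s) = t * s := by
    have h : l ^ (α⁻¹) * l ^ (-α⁻¹) = 1 := by
      rw [← Real.rpow_add hl]; simp
    calc l ^ (α⁻¹) * t * (l ^ (-α⁻¹) * s) = (l ^ (α⁻¹) * l ^ (-α⁻¹)) * (t * s) := by ring
    _ = t * s := by rw [h, one_mul]
  have ha : (l ^ (α⁻¹) * t) ^ α = l * t ^ α := by
    rw [Real.mul_rpow (by positivity) ht, ← Real.rpow_mul hl.le,
      inv_mul_cancel₀ hα0.ne', Real.rpow_one]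
  have hb : (l ^ (-α⁻¹) * s) ^ (α / (α - 1)) = l ^ (-(α-1)⁻¹) * s ^ (α / (α - 1)) := by
    rw [Real.mul_rpow (by positivity) hs, ← Real.rpow_mul hl.le]
    congr 2
    field_simp
  rw [hmul, ha, hb] at key
  refine key.trans (le_of_eq ?_)
  have h1 : l * t ^ α / α = l / α * t ^ α := by ring
  have h2 : l ^ (-(α-1)⁻¹) * s ^ (α / (α - 1)) / (α / (α - 1))
      = (α - 1) / (α * l ^ ((1 : ℝ) / (α - 1))) * s ^ (α / (α - 1)) := by
    have hlp : (0:ℝ) < l ^ (α-1)⁻¹ := Real.rpow_pos_of_pos hl _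
    rw [Real.rpow_neg hl.le, one_div]
    field_simp
  rw [h1, h2]

/-- For `α ∈ (1,2]`, `c₂ > 0`, `0 < λ < αc₂`, with
`γ₁ = (α-1)/(α λ^{1/(α-1)})` and `γ₂ = c₂ - λ/α > 0`, for every `y ∈ ℝ^D`,
`∫ exp(-c₂‖u‖₂^α + ⟨u,y⟩) du ≤ exp(γ₁‖y‖₂^{α/(α-1)}) ∫ exp(-γ₂‖u‖₂^α) du`, and the
latter integral is finite. -/
theorem integral_exp_inner_bound
    {D : ℕ} (hD : 1 ≤ D) (α : ℝ) (hα : α ∈ Set.Ioc (1 : ℝ) 2)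
    (c₂ : ℝ) (hc₂ : 0 < c₂) (l : ℝ) (hl : l ∈ Set.Ioo (0 : ℝ) (α * c₂))
    (γ₁ γ₂ : ℝ)
    (hγ₁ : γ₁ = (α - 1) / (α * l ^ ((1 : ℝ) / (α - 1))))
    (hγ₂ : γ₂ = c₂ - l / α) :
    0 < γ₂
    ∧ (∀ y : EuclideanSpace ℝ (Fin D),
        ∫⁻ u : EuclideanSpace ℝ (Fin D), ENNReal.ofReal (Real.exp (-c₂ * ‖u‖ ^ α + ⟪u, y⟫))
          ≤ ENNReal.ofReal (Real.exp (γ₁ * ‖y‖ ^ (α / (α - 1))))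
              * ∫⁻ u : EuclideanSpace ℝ (Fin D), ENNReal.ofReal (Real.exp (-γ₂ * ‖u‖ ^ α)))
    ∧ (∫⁻ u : EuclideanSpace ℝ (Fin D), ENNReal.ofReal (Real.exp (-γ₂ * ‖u‖ ^ α))) < ⊤ := by
  obtain ⟨hα1, hα2⟩ := hα
  obtain ⟨hl0, hlu⟩ := hl
  have hα0 : (0:ℝ) < α := by linarith
  have hγ₂pos : 0 < γ₂ := by
    rw [hγ₂, sub_pos, div_lt_iff₀ hα0]
    linarith [hlu]
  refine ⟨hγ₂pos, ?_, ?_⟩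
  · intro y
    have hpt : ∀ u : EuclideanSpace ℝ (Fin D),
        ENNReal.ofReal (Real.exp (-c₂ * ‖u‖ ^ α + ⟪u, y⟫))
          ≤ ENNReal.ofReal (Real.exp (γ₁ * ‖y‖ ^ (α / (α - 1))))
            * ENNReal.ofReal (Real.exp (-γ₂ * ‖u‖ ^ α)) := by
      intro u
      rw [← ENNReal.ofReal_mul (Real.exp_nonneg _), ← Real.exp_add]
      refine ENNReal.ofReal_le_ofReal (Real.exp_le_exp.mpr ?_)
      have hinner : ⟪u, y⟫ ≤ ‖u‖ * ‖y‖ := real_inner_le_norm u y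
      have hy := young_aux hα1 hl0 (norm_nonneg u) (norm_nonneg y)
      rw [hγ₁, hγ₂]
      nlinarith [hy, hinner]
    calc ∫⁻ u : EuclideanSpace ℝ (Fin D), ENNReal.ofReal (Real.exp (-c₂ * ‖u‖ ^ α + ⟪u, y⟫))
        ≤ ∫⁻ u : EuclideanSpace ℝ (Fin D),
            ENNReal.ofReal (Real.exp (γ₁ * ‖y‖ ^ (α / (α - 1))))
              * ENNReal.ofReal (Real.exp (-γ₂ * ‖u‖ ^ α)) := lintegral_mono hpt
      _ = ENNReal.ofReal (Real.exp (γ₁ * ‖y‖ ^ (α / (α - 1))))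
            * ∫⁻ u : EuclideanSpace ℝ (Fin D), ENNReal.ofReal (Real.exp (-γ₂ * ‖u‖ ^ α)) :=
          lintegral_const_mul' _ _ ENNReal.ofReal_ne_top
  · -- finiteness
    haveI : Nonempty (Fin D) := ⟨⟨0, hD⟩⟩
    set g : EuclideanSpace ℝ (Fin D) → ℝ := fun x => γ₂ ^ (α⁻¹) * ‖x‖ with hg
    have hgc : (0:ℝ) < γ₂ ^ (α⁻¹) := Real.rpow_pos_of_pos hγ₂pos _
    have h1 : g 0 = 0 := by simp [hg]
    have h2 : ∀ x, g (-x) = g x := by intro x; simp [hg]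
    have h3 : ∀ x y, g (x + y) ≤ g x + g y := by
      intro x y
      simp only [hg, ← mul_add]
      exact mul_le_mul_of_nonneg_left (norm_add_le x y) hgc.le
    have h4 : ∀ {x}, g x = 0 → x = 0 := by
      intro x hx
      have hx0 : ‖x‖ = 0 := by
        rcases mul_eq_zero.mp hx with h | h
        · exact absurd h hgc.ne'
        · exact h
      exact norm_eq_zero.mp hx0
    have h5 : ∀ (r : ℝ) x, g (r • x) ≤ |r| * g x := by
      intro r x
      simp only [hg, norm_smul, Real.norm_eq_abs]
      ring_nf
      exact le_refl _
    have key := MeasureTheory.measure_lt_one_eq_integral_div_gamma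
      (volume : Measure (EuclideanSpace ℝ (Fin D))) h1 h2 h3 h4 h5 hα0
    have hgpow : ∀ x : EuclideanSpace ℝ (Fin D), (g x) ^ α = γ₂ * ‖x‖ ^ α := by
      intro x
      simp only [hg]
      rw [Real.mul_rpow hgc.le (norm_nonneg x), ← Real.rpow_mul hγ₂pos.le,
        inv_mul_cancel₀ hα0.ne', Real.rpow_one]
    have hset : {x : EuclideanSpace ℝ (Fin D) | g x < 1}
        = Metric.ball 0 ((γ₂ ^ (α⁻¹))⁻¹) := by
      ext x
      simp only [hg, Set.mem_setOf_eq, Metric.mem_ball, dist_zero_right]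
      constructor
      · intro h
        nlinarith [mul_inv_cancel₀ hgc.ne', hgc]
      · intro h
        nlinarith [mul_inv_cancel₀ hgc.ne', hgc]
    have hpos : 0 < volume {x : EuclideanSpace ℝ (Fin D) | g x < 1} := by
      rw [hset]
      exact Metric.measure_ball_pos _ _ (by positivity)
    have hInt : Integrable (fun x : EuclideanSpace ℝ (Fin D) =>
        Real.exp (-(g x) ^ α)) := by
      by_contra hni
      rw [key, integral_undef hni] at hpos
      simp at hpos
    have hInt' : Integrable (fun x : EuclideanSpace ℝ (Fin D) =>
        Real.exp (-γ₂ * ‖x‖ ^ α)) := by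
      refine hInt.congr (Filter.Eventually.of_forall fun x => ?_)
      simp only [hgpow x, neg_mul]
    have heq : ∫⁻ u : EuclideanSpace ℝ (Fin D), ENNReal.ofReal (Real.exp (-γ₂ * ‖u‖ ^ α))
        = ENNReal.ofReal (∫ u : EuclideanSpace ℝ (Fin D), Real.exp (-γ₂ * ‖u‖ ^ α)) :=
      (MeasureTheory.ofReal_integral_eq_lintegral_ofReal hInt'
        (Filter.Eventually.of_forall fun x => (Real.exp_nonneg _))).symm
    rw [heq]
    exact ENNReal.ofReal_lt_top
end
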